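/- arXiv:2408.10825 — 5 statements merged into one kernel-verified Lean document; each statement's English description precedes it below -/
import Mathlib

section
/- For every integer L ≥ 1 and every t ∈ (0,1) such that 2^L t is not an integer, the scaled sawtooth function ζ_L is differentiable at t with |ζ_L'(t)| = 2. Consequently ∫₀¹ (ζ_L'(t))² dt = 4, so that the L²([0,1]) norm of the derivative of ζ_L equals √3 · 2^L times the L²([0,1]) norm of ζ_L itself; in particular, ‖ζ_L'‖_{L²([0,1])} ≥ 2^L ‖ζ_L‖_{L²([0,1])}, even though ‖ζ_L‖_{L²([0,1])} → 0 as L → ∞. -/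
open MeasureTheory Filter

/-- The triangular function: `ζ(t) = 2t` for `0 ≤ t < 1/2`, `ζ(t) = 2(1−t)` for
`1/2 ≤ t ≤ 1`, and `ζ(t) = 0` otherwise. -/
noncomputable def zeta (t : ℝ) : ℝ :=
  if 0 ≤ t ∧ t < 1 / 2 then 2 * t
  else if 1 / 2 ≤ t ∧ t ≤ 1 then 2 * (1 - t)
  else 0

/-- The scaled sawtooth function `ζ_L = (2/2^L) · ζ^[L]`. -/
noncomputable def zetaL (L : ℕ) (t : ℝ) : ℝ := ((2 : ℝ) / 2 ^ L) * zeta^[L] t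

lemma zeta_eq_minmax : zeta = fun t => max 0 (min (2 * t) (2 * (1 - t))) := by
  funext t
  unfold zeta
  split_ifs with h1 h2
  · rw [min_eq_left (by linarith [h1.1, h1.2]), max_eq_right (by linarith [h1.1])]
  · rw [min_eq_right (by linarith [h2.1]), max_eq_right (by linarith [h2.2])]
  · rcases lt_or_ge t 0 with h | h
    · rw [max_eq_left (le_trans (min_le_left _ _) (by linarith))]
    · have h3 : 1 / 2 ≤ t := by
        by_contra hc
        exact h1 ⟨h, by linarith⟩
      have h4 : 1 < t := by
        by_contra hc
        exact h2 ⟨h3, by linarith⟩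
      rw [max_eq_left (le_trans (min_le_right _ _) (by linarith))]

lemma zeta_cont : Continuous zeta := by
  rw [zeta_eq_minmax]
  exact continuous_const.max ((continuous_const.mul continuous_id).min
    (continuous_const.mul (continuous_const.sub continuous_id)))

lemma zeta_left {t : ℝ} (h0 : 0 ≤ t) (h1 : t ≤ 1 / 2) : zeta t = 2 * t := by
  unfold zeta
  split_ifs with ha hb
  · rfl
  · have : t = 1 / 2 := le_antisymm h1 hb.1
    rw [this]; norm_num
  · exfalso
    exact hb ⟨by by_contra hc; exact ha ⟨h0, by linarith⟩, by linarith⟩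

lemma zeta_right {t : ℝ} (h0 : 1 / 2 ≤ t) (h1 : t ≤ 1) : zeta t = 2 * (1 - t) := by
  unfold zeta
  split_ifs with ha hb
  · have : t = 1 / 2 := le_antisymm (by linarith [ha.2]) h0
    rw [this]; norm_num
  · rfl
  · exact absurd ⟨h0, h1⟩ hb

/-- substitution: integrating `f ∘ ζ` over `[0,1]` equals integrating `f`. -/
lemma integral_comp_zeta (f : ℝ → ℝ) (hf : Continuous f) :
    ∫ t in (0 : ℝ)..1, f (zeta t) = ∫ t in (0 : ℝ)..1, f t := by
  have hi : ∀ a b : ℝ, IntervalIntegrable (fun t => f (zeta t)) volume a b :=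
    fun a b => (hf.comp zeta_cont).intervalIntegrable a b
  rw [← intervalIntegral.integral_add_adjacent_intervals (hi 0 (1 / 2)) (hi (1 / 2) 1)]
  have e1 : ∫ t in (0 : ℝ)..(1 / 2), f (zeta t) = ∫ t in (0 : ℝ)..(1 / 2), f (2 * t) := by
    apply intervalIntegral.integral_congr
    intro t ht
    rw [Set.uIcc_of_le (by norm_num : (0:ℝ) ≤ 1 / 2)] at ht
    show f (zeta t) = f (2 * t)
    rw [zeta_left ht.1 ht.2]
  have e2 : ∫ t in (1 / 2 : ℝ)..1, f (zeta t) = ∫ t in (1 / 2 : ℝ)..1, f (2 * (1 - t)) := by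
    apply intervalIntegral.integral_congr
    intro t ht
    rw [Set.uIcc_of_le (by norm_num : (1/2:ℝ) ≤ 1)] at ht
    show f (zeta t) = f (2 * (1 - t))
    rw [zeta_right ht.1 ht.2]
  rw [e1, e2]
  have h1 : ∫ t in (0 : ℝ)..(1 / 2), f (2 * t)
      = (2:ℝ)⁻¹ • ∫ t in (0 : ℝ)..1, f t := by
    rw [intervalIntegral.integral_comp_mul_left f (by norm_num : (2:ℝ) ≠ 0)]
    norm_num
  have h2 : ∫ t in (1 / 2 : ℝ)..1, f (2 * (1 - t))
      = (2:ℝ)⁻¹ • ∫ t in (0 : ℝ)..1, f t := by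
    have : ∫ t in (1 / 2 : ℝ)..1, f (2 * (1 - t))
        = ∫ t in (1 / 2 : ℝ)..1, f (-2 * t + 2) := by
      apply intervalIntegral.integral_congr
      intro t _
      ring_nf
    rw [this, intervalIntegral.integral_comp_mul_add f (by norm_num : (-2:ℝ) ≠ 0) 2,
      show (-2:ℝ) * (1/2) + 2 = 1 by norm_num, show (-2:ℝ) * 1 + 2 = 0 by norm_num,
      intervalIntegral.integral_symm 0 1]
    simp
  rw [h1, h2]
  simp only [smul_eq_mul]
  ring

lemma integral_iter_sq (M : ℕ) :
    ∫ t in (0 : ℝ)..1, (zeta^[M] t) ^ 2 = 1 / 3 := by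
  induction M with
  | zero =>
    simp only [Function.iterate_zero, id_eq]
    rw [integral_pow]
    norm_num
  | succ n ih =>
    have hcomp : ∀ t, zeta^[n + 1] t = zeta^[n] (zeta t) := fun t =>
      Function.iterate_succ_apply zeta n t
    have hc : Continuous fun u => (zeta^[n] u) ^ 2 := (zeta_cont.iterate n).pow 2
    calc ∫ t in (0 : ℝ)..1, (zeta^[n + 1] t) ^ 2
        = ∫ t in (0 : ℝ)..1, (fun u => (zeta^[n] u) ^ 2) (zeta t) := by
          simp only [hcomp]
      _ = ∫ t in (0 : ℝ)..1, (zeta^[n] t) ^ 2 := integral_comp_zeta _ hc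
      _ = 1 / 3 := ih

lemma integral_zetaL_sq (M : ℕ) :
    ∫ t in (0 : ℝ)..1, (zetaL M t) ^ 2 = 4 / (3 * 4 ^ M) := by
  have : ∀ t, (zetaL M t) ^ 2 = ((2 : ℝ) / 2 ^ M) ^ 2 * (zeta^[M] t) ^ 2 := by
    intro t; unfold zetaL; ring
  simp only [this]
  rw [intervalIntegral.integral_const_mul, integral_iter_sq]
  have h4 : (4:ℝ) ^ M = ((2:ℝ) ^ M) ^ 2 := by
    rw [show (4:ℝ) = 2 ^ 2 by norm_num, ← pow_mul, mul_comm, pow_mul]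
  rw [h4]
  have h2 : ((2:ℝ) ^ M) ≠ 0 := by positivity
  field_simp
  ring

lemma sqrt_integral_zetaL_sq (M : ℕ) :
    Real.sqrt (∫ t in (0 : ℝ)..1, (zetaL M t) ^ 2)
      = 2 / (Real.sqrt 3 * 2 ^ M) := by
  rw [integral_zetaL_sq]
  have h3 : Real.sqrt 3 ^ 2 = 3 := Real.sq_sqrt (by norm_num)
  have h4 : (4:ℝ) ^ M = ((2:ℝ) ^ M) ^ 2 := by
    rw [show (4:ℝ) = 2 ^ 2 by norm_num, ← pow_mul, mul_comm, pow_mul]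
  have : (4 : ℝ) / (3 * 4 ^ M) = (2 / (Real.sqrt 3 * 2 ^ M)) ^ 2 := by
    rw [div_pow, mul_pow, h3, h4]
    norm_num
  rw [this, Real.sqrt_sq (by positivity)]

lemma iter_hasDerivAt (L : ℕ) :
    ∀ t ∈ Set.Ioo (0 : ℝ) 1, (∀ k : ℤ, (2 : ℝ) ^ L * t ≠ (k : ℝ)) →
      ∃ d : ℝ, HasDerivAt (zeta^[L]) d t ∧ |d| = 2 ^ L := by
  induction L with
  | zero =>
    intro t _ _
    exact ⟨1, by simpa using hasDerivAt_id t, by norm_num⟩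
  | succ n ih =>
    intro t ht hk
    have htne : t ≠ 1 / 2 := by
      intro hc
      apply hk (2 ^ n)
      rw [hc]
      push_cast
      ring
    rcases lt_or_gt_of_ne htne with hlt | hgt
    · -- left branch: ζ = 2t near t
      have hev : zeta =ᶠ[nhds t] fun s => 2 * s := by
        filter_upwards [isOpen_Ioo.mem_nhds (show t ∈ Set.Ioo (0:ℝ) (1/2) from ⟨ht.1, hlt⟩)]
          with s hs
        exact zeta_left hs.1.le hs.2.le
      have hz : HasDerivAt zeta 2 t := by
        have : HasDerivAt (fun s : ℝ => 2 * s) 2 t := by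
          simpa using (hasDerivAt_id t).const_mul (2:ℝ)
        exact this.congr_of_eventuallyEq hev
      have hy : (2 * t) ∈ Set.Ioo (0:ℝ) 1 := ⟨by linarith [ht.1], by linarith⟩
      have hky : ∀ k : ℤ, (2 : ℝ) ^ n * (2 * t) ≠ (k : ℝ) := by
        intro k hc
        apply hk k
        rw [← hc]; ring
      obtain ⟨d, hd, habs⟩ := ih (2 * t) hy hky
      have hzt : zeta t = 2 * t := zeta_left ht.1.le hlt.le
      have hcomp : HasDerivAt (zeta^[n] ∘ zeta) (d * 2) t :=
        HasDerivAt.comp t (by rw [hzt]; exact hd) hz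
      refine ⟨d * 2, ?_, ?_⟩
      · rw [Function.iterate_succ]
        exact hcomp
      · rw [abs_mul, habs]
        norm_num
        ring
    · -- right branch: ζ = 2(1-t) near t
      have hev : zeta =ᶠ[nhds t] fun s => 2 - 2 * s := by
        filter_upwards [isOpen_Ioo.mem_nhds (show t ∈ Set.Ioo (1/2:ℝ) 1 from ⟨hgt, ht.2⟩)]
          with s hs
        rw [zeta_right hs.1.le hs.2.le]; ring
      have hz : HasDerivAt zeta (-2) t := by
        have h1 : HasDerivAt (fun s : ℝ => 2 * s) 2 t := by
          simpa using (hasDerivAt_id t).const_mul (2:ℝ)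
        have := h1.const_sub (2:ℝ)
        exact this.congr_of_eventuallyEq hev
      have hy : (2 - 2 * t) ∈ Set.Ioo (0:ℝ) 1 := ⟨by linarith [ht.2], by linarith⟩
      have hky : ∀ k : ℤ, (2 : ℝ) ^ n * (2 - 2 * t) ≠ (k : ℝ) := by
        intro k hc
        apply hk (2 ^ (n + 1) - k)
        push_cast
        rw [pow_succ]
        linear_combination -hc
      obtain ⟨d, hd, habs⟩ := ih (2 - 2 * t) hy hky
      have hzt : zeta t = 2 - 2 * t := by
        rw [zeta_right hgt.le ht.2.le]; ring
      have hcomp : HasDerivAt (zeta^[n] ∘ zeta) (d * (-2)) t :=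
        HasDerivAt.comp t (by rw [hzt]; exact hd) hz
      refine ⟨d * (-2), ?_, ?_⟩
      · rw [Function.iterate_succ]
        exact hcomp
      · rw [abs_mul, habs]
        norm_num
        ring

lemma zetaL_hasDerivAt (L : ℕ) :
    ∀ t ∈ Set.Ioo (0 : ℝ) 1, (∀ k : ℤ, (2 : ℝ) ^ L * t ≠ (k : ℝ)) →
      ∃ d : ℝ, HasDerivAt (zetaL L) d t ∧ |d| = 2 := by
  intro t ht hk
  obtain ⟨d, hd, habs⟩ := iter_hasDerivAt L t ht hk
  refine ⟨(2 / 2 ^ L) * d, hd.const_mul _, ?_⟩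
  rw [abs_mul, habs, abs_of_pos (by positivity : (0:ℝ) < 2 / 2 ^ L)]
  field_simp

/-- For `L ≥ 1`: at every `t ∈ (0,1)` with `2^L t` not an integer, `ζ_L` is differentiable
with `|ζ_L'(t)| = 2`; consequently `∫₀¹ ζ_L'(t)² dt = 4`, so the `L²([0,1])` norm of the
derivative equals `√3·2^L` times the `L²([0,1])` norm of `ζ_L` itself, in particular
`‖ζ_L'‖ ≥ 2^L ‖ζ_L‖`, even though `‖ζ_L‖ → 0` as `L → ∞`. -/
theorem zetaL_deriv_L2_blowup (L : ℕ) (hL : 1 ≤ L) :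
    (∀ t ∈ Set.Ioo (0 : ℝ) 1, (∀ k : ℤ, (2 : ℝ) ^ L * t ≠ (k : ℝ)) →
      DifferentiableAt ℝ (zetaL L) t ∧ |deriv (zetaL L) t| = 2) ∧
    (∫ t in (0 : ℝ)..1, deriv (zetaL L) t ^ 2) = 4 ∧
    Real.sqrt (∫ t in (0 : ℝ)..1, deriv (zetaL L) t ^ 2)
      = Real.sqrt 3 * 2 ^ L * Real.sqrt (∫ t in (0 : ℝ)..1, zetaL L t ^ 2) ∧
    Real.sqrt (∫ t in (0 : ℝ)..1, deriv (zetaL L) t ^ 2)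
      ≥ 2 ^ L * Real.sqrt (∫ t in (0 : ℝ)..1, zetaL L t ^ 2) ∧
    Tendsto (fun M : ℕ => Real.sqrt (∫ t in (0 : ℝ)..1, zetaL M t ^ 2))
      atTop (nhds 0) := by
  have part1 : ∀ t ∈ Set.Ioo (0 : ℝ) 1, (∀ k : ℤ, (2 : ℝ) ^ L * t ≠ (k : ℝ)) →
      DifferentiableAt ℝ (zetaL L) t ∧ |deriv (zetaL L) t| = 2 := by
    intro t ht hk
    obtain ⟨d, hd, habs⟩ := zetaL_hasDerivAt L t ht hk
    exact ⟨hd.differentiableAt, by rw [hd.deriv]; exact habs⟩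
  have part2 : (∫ t in (0 : ℝ)..1, deriv (zetaL L) t ^ 2) = 4 := by
    have hS : volume (⋃ k : ℤ, {((k : ℝ) / 2 ^ L)}) = 0 :=
      (Set.countable_iUnion fun k => Set.countable_singleton _).measure_zero volume
    have hae : ∀ᵐ t ∂(volume : Measure ℝ), t ∈ Set.uIoc (0:ℝ) 1 →
        deriv (zetaL L) t ^ 2 = (4 : ℝ) := by
      filter_upwards [measure_eq_zero_iff_ae_notMem.mp hS] with t htS htI
      rw [Set.uIoc_of_le (by norm_num : (0:ℝ) ≤ 1)] at htI
      have hk : ∀ k : ℤ, (2 : ℝ) ^ L * t ≠ (k : ℝ) := by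
        intro k hc
        apply htS
        refine Set.mem_iUnion.mpr ⟨k, ?_⟩
        simp only [Set.mem_singleton_iff]
        field_simp at hc ⊢
        linarith [hc]
      have ht1 : t ≠ 1 := by
        intro hc
        exact hk (2 ^ L) (by rw [hc]; push_cast; ring)
      have ht : t ∈ Set.Ioo (0:ℝ) 1 := ⟨htI.1, lt_of_le_of_ne htI.2 ht1⟩
      obtain ⟨_, habs⟩ := part1 t ht hk
      rw [← sq_abs, habs]
      norm_num
    rw [intervalIntegral.integral_congr_ae hae]
    simp
  have hsqL := sqrt_integral_zetaL_sq L
  have hsqrt3 : (1:ℝ) ≤ Real.sqrt 3 := by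
    rw [show (1:ℝ) = Real.sqrt 1 from (Real.sqrt_one).symm]
    exact Real.sqrt_le_sqrt (by norm_num)
  have hsqrt3pos : (0:ℝ) < Real.sqrt 3 := by linarith
  have part3 : Real.sqrt (∫ t in (0 : ℝ)..1, deriv (zetaL L) t ^ 2)
      = Real.sqrt 3 * 2 ^ L * Real.sqrt (∫ t in (0 : ℝ)..1, zetaL L t ^ 2) := by
    rw [part2, hsqL, show (4:ℝ) = 2 ^ 2 by norm_num, Real.sqrt_sq (by norm_num : (0:ℝ) ≤ 2)]
    field_simp
  have part4 : Real.sqrt (∫ t in (0 : ℝ)..1, deriv (zetaL L) t ^ 2)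
      ≥ 2 ^ L * Real.sqrt (∫ t in (0 : ℝ)..1, zetaL L t ^ 2) := by
    rw [part3]
    have h0 : 0 ≤ Real.sqrt (∫ t in (0 : ℝ)..1, zetaL L t ^ 2) := Real.sqrt_nonneg _
    have hx : (0:ℝ) ≤ 2 ^ L * Real.sqrt (∫ t in (0 : ℝ)..1, zetaL L t ^ 2) :=
      mul_nonneg (by positivity) h0
    nlinarith [mul_nonneg (show (0:ℝ) ≤ Real.sqrt 3 - 1 by linarith) hx]
  have part5 : Tendsto (fun M : ℕ => Real.sqrt (∫ t in (0 : ℝ)..1, zetaL M t ^ 2))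
      atTop (nhds 0) := by
    have heq : (fun M : ℕ => Real.sqrt (∫ t in (0 : ℝ)..1, zetaL M t ^ 2))
        = fun M : ℕ => (2 / Real.sqrt 3) * (1 / 2 : ℝ) ^ M := by
      funext M
      rw [sqrt_integral_zetaL_sq M]
      rw [div_pow]
      field_simp
      simp
    rw [heq]
    have h1 : Tendsto (fun M : ℕ => ((1 / 2 : ℝ)) ^ M) atTop (nhds 0) :=
      tendsto_pow_atTop_nhds_zero_of_lt_one (by norm_num) (by norm_num)
    simpa using h1.const_mul (2 / Real.sqrt 3)
  exact ⟨part1, part2, part3, part4, part5⟩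
end

section
/- Let K : ℝ → ℝ be a continuously differentiable kernel supported on [−1, 1] with derivative K̇, let m ≥ 0 be an integer, h > 0, and let ĝ and m₀ be square-integrable functions on ℝ^m × ℝ with respect to Lebesgue measure λ. Suppose ‖ĝ − m₀‖_{L²(λ)} ≤ r, suppose m₀ is differentiable in its last coordinate with partial derivative m₀ⱼ, and suppose the smoothed derivative m₀ⱼˢ satisfies ‖m₀ⱼˢ − m₀ⱼ‖_{L²(λ)} ≤ B. Then the smoothed derivative estimator ĝⱼˢ satisfies ‖ĝⱼˢ − m₀ⱼ‖_{L²(λ)} ≤ (√2 ‖K̇‖_{L²([−1,1])}/h) · r + B. -/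
open MeasureTheory
open scoped ENNReal

namespace SmoothedDerivAux


lemma rpow_two' (x : ℝ≥0∞) : x ^ (2:ℝ) = x ^ (2:ℕ) := by
  rw [show (2:ℝ) = ((2:ℕ):ℝ) by norm_num, ENNReal.rpow_natCast]

lemma mp_slice (m : ℕ) (c : ℝ) :
    MeasurePreserving (fun p : (Fin m → ℝ) × ℝ => (p.1, p.2 - c))
      (volume : Measure ((Fin m → ℝ) × ℝ)) volume := by
  have := (MeasurePreserving.id (volume : Measure (Fin m → ℝ))).prod
    (measurePreserving_sub_right (volume : Measure ℝ) c)
  rw [← Measure.volume_eq_prod] at this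
  exact this

lemma qmp_T (m : ℕ) (h : ℝ) :
    Measure.QuasiMeasurePreserving
      (fun q : ((Fin m → ℝ) × ℝ) × ℝ => (q.1.1, q.1.2 - q.2 * h))
      ((volume : Measure ((Fin m → ℝ) × ℝ)).prod
        (volume.restrict (Set.Ioc (-1:ℝ) 1)))
      (volume : Measure ((Fin m → ℝ) × ℝ)) := by
  apply MeasureTheory.QuasiMeasurePreserving.prod_of_left
  · exact (measurable_fst.fst.prodMk (measurable_fst.snd.sub (measurable_snd.mul_const h)))
  · exact Filter.Eventually.of_forall fun a => (mp_slice m (a * h)).quasiMeasurePreserving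

lemma cs_integral {ν : Measure ℝ} {u v : ℝ → ℝ}
    (hu : MemLp u 2 ν) (hv : MemLp v 2 ν) :
    |∫ a, u a * v a ∂ν| ≤ Real.sqrt (∫ a, u a ^ 2 ∂ν) * Real.sqrt (∫ a, v a ^ 2 ∂ν) := by
  have hpq : Real.HolderConjugate 2 2 := Real.HolderConjugate.two_two
  have hu2 : MemLp (fun a => |u a|) (ENNReal.ofReal 2) ν := by
    simpa [Real.norm_eq_abs, ENNReal.ofReal_ofNat] using hu.norm
  have hv2 : MemLp (fun a => |v a|) (ENNReal.ofReal 2) ν := by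
    simpa [Real.norm_eq_abs, ENNReal.ofReal_ofNat] using hv.norm
  have H := integral_mul_le_Lp_mul_Lq_of_nonneg hpq
    (Filter.Eventually.of_forall fun a => abs_nonneg (u a))
    (Filter.Eventually.of_forall fun a => abs_nonneg (v a)) hu2 hv2
  have h1 : |∫ a, u a * v a ∂ν| ≤ ∫ a, |u a| * |v a| ∂ν := by
    calc |∫ a, u a * v a ∂ν| ≤ ∫ a, ‖u a * v a‖ ∂ν := by
          simpa [Real.norm_eq_abs] using norm_integral_le_integral_norm (fun a => u a * v a) (μ := ν)
      _ = ∫ a, |u a| * |v a| ∂ν := by simp [abs_mul, Real.norm_eq_abs]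
  have e1 : ∀ w : ℝ → ℝ, (∫ a, |w a| ^ (2:ℝ) ∂ν) = ∫ a, w a ^ 2 ∂ν := by
    intro w
    refine integral_congr_ae (Filter.Eventually.of_forall fun a => ?_)
    show |w a| ^ (2:ℝ) = w a ^ 2
    rw [← sq_abs, ← Real.rpow_natCast |w a| 2]; norm_num
  have e2 : ∀ x : ℝ, 0 ≤ x → x ^ (1/(2:ℝ)) = Real.sqrt x := fun x hx => by
    rw [Real.sqrt_eq_rpow]
  calc |∫ a, u a * v a ∂ν| ≤ ∫ a, |u a| * |v a| ∂ν := h1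
    _ ≤ (∫ a, |u a| ^ (2:ℝ) ∂ν) ^ (1/(2:ℝ)) * (∫ a, |v a| ^ (2:ℝ) ∂ν) ^ (1/(2:ℝ)) := H
    _ = Real.sqrt (∫ a, u a ^ 2 ∂ν) * Real.sqrt (∫ a, v a ^ 2 ∂ν) := by
        rw [e1 u, e1 v, e2 _ (integral_nonneg fun a => sq_nonneg _),
          e2 _ (integral_nonneg fun a => sq_nonneg _)]

lemma key (m : ℕ) (k : ℝ → ℝ) (hk : Continuous k) (hks : HasCompactSupport k)
    (h : ℝ) (g : (Fin m → ℝ) × ℝ → ℝ) (hg : MemLp g 2 volume) :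
    AEStronglyMeasurable (fun p : (Fin m → ℝ) × ℝ =>
      ∫ a in (-1:ℝ)..1, g (p.1, p.2 - a * h) * k a) volume ∧
    eLpNorm (fun p : (Fin m → ℝ) × ℝ =>
      ∫ a in (-1:ℝ)..1, g (p.1, p.2 - a * h) * k a) 2 volume ≤
      ENNReal.ofReal (Real.sqrt 2 * Real.sqrt (∫ a in (-1:ℝ)..1, k a ^ 2)) *
        eLpNorm g 2 volume ∧
    ∀ᵐ p : (Fin m → ℝ) × ℝ ∂volume,
      IntervalIntegrable (fun a => g (p.1, p.2 - a * h) * k a) volume (-1) 1 := by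
  set ν : Measure ℝ := volume.restrict (Set.Ioc (-1:ℝ) 1) with hνdef
  have hνfin : IsFiniteMeasure ν := by
    constructor; rw [Measure.restrict_apply_univ]; exact measure_Ioc_lt_top
  have hint : ∀ (w : ℝ → ℝ), (∫ a in (-1:ℝ)..1, w a) = ∫ a, w a ∂ν := fun w =>
    intervalIntegral.integral_of_le (by norm_num)
  set g' := hg.1.mk g with hg'def
  have hg'sm : StronglyMeasurable g' := hg.1.stronglyMeasurable_mk
  have hgg' : g =ᵐ[volume] g' := hg.1.ae_eq_mk
  have hg' : MemLp g' 2 volume := hg.ae_eq hgg'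
  have hT := qmp_T m h
  have hTm : Measurable (fun q : ((Fin m → ℝ) × ℝ) × ℝ => (q.1.1, q.1.2 - q.2 * h)) :=
    measurable_fst.fst.prodMk (measurable_fst.snd.sub (measurable_snd.mul_const h))
  have hGm0 : Measurable (fun p : (Fin m → ℝ) × ℝ => (‖g' p‖₊ : ℝ≥0∞) ^ (2:ℕ)) :=
    (hg'sm.measurable.nnnorm.coe_nnreal_ennreal).pow_const 2
  have hGm : Measurable (fun q : ((Fin m → ℝ) × ℝ) × ℝ =>
      (‖g' (q.1.1, q.1.2 - q.2 * h)‖₊ : ℝ≥0∞) ^ (2:ℕ)) := hGm0.comp hTm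
  set I : ℝ≥0∞ := ∫⁻ p, (‖g' p‖₊ : ℝ≥0∞) ^ (2:ℕ) ∂(volume : Measure ((Fin m → ℝ) × ℝ)) with hIdef
  have hI_eq : eLpNorm g 2 volume = I ^ (1/(2:ℝ)) := by
    rw [eLpNorm_congr_ae hgg', eLpNorm_eq_lintegral_rpow_enorm_toReal (by norm_num) (by norm_num)]
    simp only [ENNReal.toReal_ofNat, enorm_eq_nnnorm]
    congr 1
    exact lintegral_congr fun p => rpow_two' _
  have hI_lt : I < ⊤ := by
    have := lintegral_rpow_enorm_lt_top_of_eLpNorm_lt_top (f := g') (p := 2) (μ := volume)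
      (by norm_num) (by norm_num) hg'.2
    simp only [ENNReal.toReal_ofNat, enorm_eq_nnnorm] at this
    have heq : (∫⁻ p, (‖g' p‖₊ : ℝ≥0∞) ^ (2:ℝ) ∂(volume : Measure ((Fin m → ℝ) × ℝ))) = I :=
      lintegral_congr fun p => rpow_two' _
    rwa [heq] at this
  set J : ℝ≥0∞ := ∫⁻ q, (‖g' (q.1.1, q.1.2 - q.2 * h)‖₊ : ℝ≥0∞) ^ (2:ℕ)
      ∂((volume : Measure ((Fin m → ℝ) × ℝ)).prod ν) with hJdef
  have hJ1 : J = ∫⁻ p, (∫⁻ a, (‖g' (p.1, p.2 - a * h)‖₊ : ℝ≥0∞) ^ (2:ℕ) ∂ν)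
      ∂(volume : Measure ((Fin m → ℝ) × ℝ)) :=
    MeasureTheory.lintegral_prod _ hGm.aemeasurable
  have hJ2 : J = I * ENNReal.ofReal 2 := by
    rw [hJdef, MeasureTheory.lintegral_prod_symm _ hGm.aemeasurable]
    have hsl : ∀ a : ℝ, (∫⁻ p : (Fin m → ℝ) × ℝ,
        (‖g' (p.1, p.2 - a * h)‖₊ : ℝ≥0∞) ^ (2:ℕ) ∂volume) = I := fun a =>
      (mp_slice m (a * h)).lintegral_comp hGm0
    rw [lintegral_congr fun a => hsl a, lintegral_const, Measure.restrict_apply_univ,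
      Real.volume_Ioc]
    norm_num
  have hJ_lt : J < ⊤ := by
    rw [hJ2]
    exact ENNReal.mul_lt_top hI_lt ENNReal.ofReal_lt_top
  have hfin : ∀ᵐ p ∂(volume : Measure ((Fin m → ℝ) × ℝ)),
      (∫⁻ a, (‖g' (p.1, p.2 - a * h)‖₊ : ℝ≥0∞) ^ (2:ℕ) ∂ν) < ⊤ := by
    apply ae_lt_top (hGm.lintegral_prod_right')
    rw [← hJ1]; exact hJ_lt.ne
  have hae2 : ∀ᵐ p ∂(volume : Measure ((Fin m → ℝ) × ℝ)),
      ∀ᵐ a ∂ν, g (p.1, p.2 - a * h) = g' (p.1, p.2 - a * h) := by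
    have := hT.ae_eq hgg'
    exact Measure.ae_ae_of_ae_prod this
  have hk2 : MemLp k 2 ν := (hk.memLp_of_hasCompactSupport hks).restrict _
  have main : ∀ᵐ p ∂(volume : Measure ((Fin m → ℝ) × ℝ)),
      IntervalIntegrable (fun a => g (p.1, p.2 - a * h) * k a) volume (-1) 1 ∧
      (‖∫ a in (-1:ℝ)..1, g (p.1, p.2 - a * h) * k a‖₊ : ℝ≥0∞) ^ (2:ℕ) ≤
        (∫⁻ a, (‖g' (p.1, p.2 - a * h)‖₊ : ℝ≥0∞) ^ (2:ℕ) ∂ν) *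
          ENNReal.ofReal (∫ a, k a ^ 2 ∂ν) := by
    filter_upwards [hfin, hae2] with p h1 h2
    set u := fun a : ℝ => g' (p.1, p.2 - a * h) with hu_def
    have hu_sm : StronglyMeasurable u := hg'sm.comp_measurable
      (measurable_const.prodMk (measurable_const.sub (measurable_id.mul_const h)))
    have hu : MemLp u 2 ν := by
      refine ⟨hu_sm.aestronglyMeasurable, ?_⟩
      rw [eLpNorm_eq_lintegral_rpow_enorm_toReal (by norm_num) (by norm_num)]
      refine ENNReal.rpow_lt_top_of_nonneg (by norm_num) ?_
      simp only [ENNReal.toReal_ofNat, enorm_eq_nnnorm]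
      rw [show (∫⁻ a, (‖u a‖₊ : ℝ≥0∞) ^ (2:ℝ) ∂ν) =
          ∫⁻ a, (‖u a‖₊ : ℝ≥0∞) ^ (2:ℕ) ∂ν from lintegral_congr fun a => rpow_two' _]
      exact h1.ne
    have hslice : (fun a => g (p.1, p.2 - a * h)) =ᵐ[ν] u := h2
    have hprod : Integrable (fun a => u a * k a) ν := by
      have hb : ∀ a, ‖u a * k a‖ ≤ u a ^ 2 + k a ^ 2 := fun a => by
        rw [Real.norm_eq_abs, abs_mul]
        nlinarith [sq_nonneg (|u a| - |k a|), sq_abs (u a), sq_abs (k a),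
          abs_nonneg (u a), abs_nonneg (k a)]
      exact Integrable.mono' (hu.integrable_sq.add hk2.integrable_sq)
        (hu_sm.aestronglyMeasurable.mul hk2.1) (Filter.Eventually.of_forall hb)
    have hmul_ae : (fun a => u a * k a) =ᵐ[ν] fun a => g (p.1, p.2 - a * h) * k a := by
      filter_upwards [hslice] with a ha; rw [ha]
    have hgood : IntervalIntegrable (fun a => g (p.1, p.2 - a * h) * k a) volume (-1) 1 := by
      rw [intervalIntegrable_iff_integrableOn_Ioc_of_le (by norm_num)]
      exact hprod.congr hmul_ae
    refine ⟨hgood, ?_⟩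
    have heqint : (∫ a in (-1:ℝ)..1, g (p.1, p.2 - a * h) * k a) = ∫ a, u a * k a ∂ν := by
      rw [hint]
      exact integral_congr_ae hmul_ae.symm
    have hcs := cs_integral hu hk2
    have hA : (0:ℝ) ≤ ∫ a, u a ^ 2 ∂ν := integral_nonneg fun a => sq_nonneg _
    have hB : (0:ℝ) ≤ ∫ a, k a ^ 2 ∂ν := integral_nonneg fun a => sq_nonneg _
    have h3 : (‖∫ a in (-1:ℝ)..1, g (p.1, p.2 - a * h) * k a‖₊ : ℝ≥0∞) ≤
        ENNReal.ofReal (Real.sqrt (∫ a, u a ^ 2 ∂ν) * Real.sqrt (∫ a, k a ^ 2 ∂ν)) := by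
      rw [← enorm_eq_nnnorm, Real.enorm_eq_ofReal_abs, heqint]
      exact ENNReal.ofReal_le_ofReal hcs
    calc (‖∫ a in (-1:ℝ)..1, g (p.1, p.2 - a * h) * k a‖₊ : ℝ≥0∞) ^ (2:ℕ)
        ≤ (ENNReal.ofReal (Real.sqrt (∫ a, u a ^ 2 ∂ν) * Real.sqrt (∫ a, k a ^ 2 ∂ν))) ^ (2:ℕ) :=
          pow_le_pow_left' h3 2
      _ = ENNReal.ofReal (∫ a, u a ^ 2 ∂ν) * ENNReal.ofReal (∫ a, k a ^ 2 ∂ν) := by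
          rw [← ENNReal.ofReal_pow (by positivity), mul_pow,
            Real.sq_sqrt hA, Real.sq_sqrt hB, ENNReal.ofReal_mul hA]
      _ = (∫⁻ a, (‖u a‖₊ : ℝ≥0∞) ^ (2:ℕ) ∂ν) * ENNReal.ofReal (∫ a, k a ^ 2 ∂ν) := by
          congr 1
          rw [ofReal_integral_eq_lintegral_ofReal hu.integrable_sq
            (Filter.Eventually.of_forall fun a => sq_nonneg _)]
          refine lintegral_congr fun a => ?_
          rw [show u a ^ 2 = |u a| ^ 2 from (sq_abs _).symm,
            ENNReal.ofReal_pow (abs_nonneg _), ← Real.enorm_eq_ofReal_abs, enorm_eq_nnnorm]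
  -- measurability of the smoothed function
  have hFq : AEStronglyMeasurable
      (fun q : ((Fin m → ℝ) × ℝ) × ℝ => g (q.1.1, q.1.2 - q.2 * h) * k q.2)
      ((volume : Measure ((Fin m → ℝ) × ℝ)).prod ν) := by
    have h1 : AEStronglyMeasurable
        (fun q : ((Fin m → ℝ) × ℝ) × ℝ => g (q.1.1, q.1.2 - q.2 * h))
        ((volume : Measure ((Fin m → ℝ) × ℝ)).prod ν) :=
      ((hg'sm.comp_measurable hTm).aestronglyMeasurable).congr (hT.ae_eq hgg').symm
    exact h1.mul ((hk.stronglyMeasurable.comp_measurable measurable_snd).aestronglyMeasurable)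
  have hSrw : (fun p : (Fin m → ℝ) × ℝ => ∫ a in (-1:ℝ)..1, g (p.1, p.2 - a * h) * k a)
      = fun p : (Fin m → ℝ) × ℝ => ∫ a, g (p.1, p.2 - a * h) * k a ∂ν :=
    funext fun p => hint _
  have hSm : AEStronglyMeasurable (fun p : (Fin m → ℝ) × ℝ =>
      ∫ a in (-1:ℝ)..1, g (p.1, p.2 - a * h) * k a) volume := by
    rw [hSrw]; exact hFq.integral_prod_right'
  refine ⟨hSm, ?_, main.mono fun p hp => hp.1⟩
  -- eLpNorm bound
  have hCk : (0:ℝ) ≤ ∫ a, k a ^ 2 ∂ν := integral_nonneg fun a => sq_nonneg _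
  have hS2 : (∫⁻ p, (‖∫ a in (-1:ℝ)..1, g (p.1, p.2 - a * h) * k a‖₊ : ℝ≥0∞) ^ (2:ℕ)
      ∂(volume : Measure ((Fin m → ℝ) × ℝ))) ≤
      (I * ENNReal.ofReal 2) * ENNReal.ofReal (∫ a, k a ^ 2 ∂ν) := by
    calc (∫⁻ p, (‖∫ a in (-1:ℝ)..1, g (p.1, p.2 - a * h) * k a‖₊ : ℝ≥0∞) ^ (2:ℕ)
        ∂(volume : Measure ((Fin m → ℝ) × ℝ)))
        ≤ ∫⁻ p, (∫⁻ a, (‖g' (p.1, p.2 - a * h)‖₊ : ℝ≥0∞) ^ (2:ℕ) ∂ν) *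
            ENNReal.ofReal (∫ a, k a ^ 2 ∂ν) ∂(volume : Measure ((Fin m → ℝ) × ℝ)) :=
          lintegral_mono_ae (main.mono fun p hp => hp.2)
      _ = (∫⁻ p, (∫⁻ a, (‖g' (p.1, p.2 - a * h)‖₊ : ℝ≥0∞) ^ (2:ℕ) ∂ν)
            ∂(volume : Measure ((Fin m → ℝ) × ℝ))) * ENNReal.ofReal (∫ a, k a ^ 2 ∂ν) :=
          lintegral_mul_const' _ _ ENNReal.ofReal_ne_top
      _ = J * ENNReal.ofReal (∫ a, k a ^ 2 ∂ν) := by rw [← hJ1]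
      _ = (I * ENNReal.ofReal 2) * ENNReal.ofReal (∫ a, k a ^ 2 ∂ν) := by rw [hJ2]
  rw [eLpNorm_eq_lintegral_rpow_enorm_toReal (by norm_num) (by norm_num)]
  simp only [ENNReal.toReal_ofNat, enorm_eq_nnnorm]
  rw [show (∫⁻ p, (‖∫ a in (-1:ℝ)..1, g (p.1, p.2 - a * h) * k a‖₊ : ℝ≥0∞) ^ (2:ℝ)
      ∂(volume : Measure ((Fin m → ℝ) × ℝ))) =
      ∫⁻ p, (‖∫ a in (-1:ℝ)..1, g (p.1, p.2 - a * h) * k a‖₊ : ℝ≥0∞) ^ (2:ℕ)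
      ∂(volume : Measure ((Fin m → ℝ) × ℝ)) from lintegral_congr fun p => rpow_two' _]
  calc (∫⁻ p, (‖∫ a in (-1:ℝ)..1, g (p.1, p.2 - a * h) * k a‖₊ : ℝ≥0∞) ^ (2:ℕ)
      ∂(volume : Measure ((Fin m → ℝ) × ℝ))) ^ (1/(2:ℝ))
      ≤ ((I * ENNReal.ofReal 2) * ENNReal.ofReal (∫ a, k a ^ 2 ∂ν)) ^ (1/(2:ℝ)) :=
        ENNReal.rpow_le_rpow hS2 (by norm_num)
    _ = ENNReal.ofReal (Real.sqrt 2 * Real.sqrt (∫ a in (-1:ℝ)..1, k a ^ 2)) * eLpNorm g 2 volume := by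
        rw [ENNReal.mul_rpow_of_nonneg _ _ (by norm_num),
          ENNReal.mul_rpow_of_nonneg _ _ (by norm_num),
          ENNReal.ofReal_rpow_of_nonneg (by norm_num) (by norm_num),
          ENNReal.ofReal_rpow_of_nonneg hCk (by norm_num),
          ← Real.sqrt_eq_rpow, ← Real.sqrt_eq_rpow, hI_eq, hint fun a => k a ^ 2,
          ENNReal.ofReal_mul (Real.sqrt_nonneg 2)]
        ring



lemma mp_slice' (m : ℕ) (c : ℝ) :
    MeasurePreserving (fun p : (Fin m → ℝ) × ℝ => (p.1, p.2 - c))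
      (volume : Measure ((Fin m → ℝ) × ℝ)) volume := by
  have := (MeasurePreserving.id (volume : Measure (Fin m → ℝ))).prod
    (measurePreserving_sub_right (volume : Measure ℝ) c)
  rw [← Measure.volume_eq_prod] at this
  exact this

lemma aesm_deriv (m : ℕ) (m₀ m₀j : (Fin m → ℝ) × ℝ → ℝ)
    (hm₀ : AEStronglyMeasurable m₀ (volume : Measure ((Fin m → ℝ) × ℝ)))
    (hderiv : ∀ (f : Fin m → ℝ) (x : ℝ), HasDerivAt (fun y => m₀ (f, y)) (m₀j (f, x)) x) :
    AEStronglyMeasurable m₀j (volume : Measure ((Fin m → ℝ) × ℝ)) := by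
  have hshift : ∀ c : ℝ, AEStronglyMeasurable
      (fun p : (Fin m → ℝ) × ℝ => m₀ (p.1, p.2 + c)) volume := by
    intro c
    have := hm₀.comp_quasiMeasurePreserving (mp_slice' m (-c)).quasiMeasurePreserving
    simpa [sub_neg_eq_add, Function.comp_def] using this
  set G : ℕ → ((Fin m → ℝ) × ℝ) → ℝ :=
    fun n p => (m₀ (p.1, p.2 + ((n:ℝ)+1)⁻¹) - m₀ p) * ((n:ℝ)+1) with hGdef
  have hG : ∀ n, AEStronglyMeasurable (G n) volume := fun n => ((hshift _).sub hm₀).mul_const _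
  apply aestronglyMeasurable_of_tendsto_ae Filter.atTop hG
  refine Filter.Eventually.of_forall fun p => ?_
  obtain ⟨f, x⟩ := p
  have hslope := hasDerivAt_iff_tendsto_slope.mp (hderiv f x)
  have h0 : Filter.Tendsto (fun n : ℕ => ((n:ℝ)+1)⁻¹) Filter.atTop (nhds 0) := by
    have h1 : Filter.Tendsto (fun n : ℕ => (n:ℝ)+1) Filter.atTop Filter.atTop :=
      Filter.tendsto_atTop_add_const_right _ 1 tendsto_natCast_atTop_atTop
    exact h1.inv_tendsto_atTop
  have hseq : Filter.Tendsto (fun n : ℕ => x + ((n:ℝ)+1)⁻¹) Filter.atTop (nhdsWithin x {x}ᶜ) := by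
    refine tendsto_nhdsWithin_of_tendsto_nhds_of_eventually_within _ ?_ ?_
    · simpa using tendsto_const_nhds.add h0
    · refine Filter.Eventually.of_forall fun n => ?_
      have ht : (0:ℝ) < ((n:ℝ)+1)⁻¹ := by positivity
      simp only [Set.mem_compl_iff, Set.mem_singleton_iff]
      exact ne_of_gt (lt_add_of_pos_right x ht)
  have hcomp := hslope.comp hseq
  refine hcomp.congr fun n => ?_
  have ht : (0:ℝ) < ((n:ℝ)+1)⁻¹ := by positivity
  show slope (fun y => m₀ (f, y)) x (x + ((n:ℝ)+1)⁻¹) = G n (f, x)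
  rw [slope_def_field]
  simp only [hGdef, add_sub_cancel_left]
  field_simp

lemma sqrt_sq_integral_eq {α : Type*} [MeasurableSpace α] {μ : Measure α} {F : α → ℝ}
    (hF : MemLp F 2 μ) : Real.sqrt (∫ p, F p ^ 2 ∂μ) = (eLpNorm F 2 μ).toReal := by
  rw [hF.eLpNorm_eq_integral_rpow_norm (by norm_num) (by norm_num)]
  rw [ENNReal.toReal_ofReal
    (Real.rpow_nonneg (integral_nonneg fun a => by positivity) _)]
  simp only [ENNReal.toReal_ofNat]
  rw [show (∫ a, ‖F a‖ ^ (2:ℝ) ∂μ) = ∫ a, F a ^ 2 ∂μ from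
    integral_congr_ae (Filter.Eventually.of_forall fun a => by
      show ‖F a‖ ^ (2:ℝ) = F a ^ 2
      rw [Real.norm_eq_abs, ← sq_abs (F a), ← Real.rpow_natCast |F a| 2]; norm_num)]
  rw [Real.sqrt_eq_rpow]; norm_num


end SmoothedDerivAux

open SmoothedDerivAux in

/-- Smoothing recovers the derivative-estimation rate: if `‖ĝ − m₀‖_{L²(λ)} ≤ r`, if `m₀`
is differentiable in its last coordinate with partial derivative `m₀ⱼ`, and if the smoothed
partial derivative `m₀ⱼˢ(f,x) = (1/h)∫_{−1}^1 m₀(f, x − a h) K̇(a) da` satisfies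
`‖m₀ⱼˢ − m₀ⱼ‖_{L²(λ)} ≤ B`, then the smoothed derivative estimator `ĝⱼˢ` satisfies
`‖ĝⱼˢ − m₀ⱼ‖_{L²(λ)} ≤ (√2 ‖K̇‖_{L²([−1,1])}/h) r + B`. -/
theorem smoothed_deriv_estimation_rate (m : ℕ) (K : ℝ → ℝ) (hK : ContDiff ℝ 1 K)
    (hsupp : Function.support K ⊆ Set.Icc (-1) 1) (h : ℝ) (hh : 0 < h) (r B : ℝ)
    (ghat m₀ m₀j : (Fin m → ℝ) × ℝ → ℝ)
    (hghat : MemLp ghat 2 volume) (hm₀ : MemLp m₀ 2 volume)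
    (hderiv : ∀ (f : Fin m → ℝ) (x : ℝ), HasDerivAt (fun y => m₀ (f, y)) (m₀j (f, x)) x)
    (hrate : Real.sqrt (∫ p : (Fin m → ℝ) × ℝ, (ghat p - m₀ p) ^ 2) ≤ r)
    (hbias : Real.sqrt (∫ p : (Fin m → ℝ) × ℝ,
        ((1 / h) * (∫ a in (-1 : ℝ)..1, m₀ (p.1, p.2 - a * h) * deriv K a) - m₀j p) ^ 2)
      ≤ B) :
    Real.sqrt (∫ p : (Fin m → ℝ) × ℝ,
        ((1 / h) * (∫ a in (-1 : ℝ)..1, ghat (p.1, p.2 - a * h) * deriv K a) - m₀j p) ^ 2)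
      ≤ (Real.sqrt 2 * Real.sqrt (∫ a in (-1 : ℝ)..1, deriv K a ^ 2) / h) * r + B := by
  have hkc : Continuous (deriv K) := hK.continuous_deriv le_rfl
  have hks : HasCompactSupport (deriv K) := by
    have hKs : HasCompactSupport K := IsCompact.of_isClosed_subset isCompact_Icc
      (isClosed_tsupport K) (closure_minimal hsupp isClosed_Icc)
    exact hKs.deriv
  have hrge0 : 0 ≤ r := le_trans (Real.sqrt_nonneg _) hrate
  have hBge0 : 0 ≤ B := le_trans (Real.sqrt_nonneg _) hbias
  have hCk : 0 ≤ ∫ a in (-1:ℝ)..1, deriv K a ^ 2 := by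
    rw [intervalIntegral.integral_of_le (by norm_num : (-1:ℝ) ≤ 1)]
    exact integral_nonneg fun a => sq_nonneg _
  set c0 : ℝ := Real.sqrt 2 * Real.sqrt (∫ a in (-1:ℝ)..1, deriv K a ^ 2) with hc0
  have hc0n : 0 ≤ c0 := mul_nonneg (Real.sqrt_nonneg _) (Real.sqrt_nonneg _)
  have hd : MemLp (fun p : (Fin m → ℝ) × ℝ => ghat p - m₀ p) 2 volume := hghat.sub hm₀
  obtain ⟨hSg_m, _, hSg_i⟩ := key m (deriv K) hkc hks h ghat hghat
  obtain ⟨hSm_m, _, hSm_i⟩ := key m (deriv K) hkc hks h m₀ hm₀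
  obtain ⟨hSd_m, hSd_b, _⟩ := key m (deriv K) hkc hks h
    (fun p : (Fin m → ℝ) × ℝ => ghat p - m₀ p) hd
  have hm₀j : AEStronglyMeasurable m₀j volume := aesm_deriv m m₀ m₀j hm₀.1 hderiv
  have hrate' : eLpNorm (fun p : (Fin m → ℝ) × ℝ => ghat p - m₀ p) 2 volume
      ≤ ENNReal.ofReal r := by
    rw [ENNReal.le_ofReal_iff_toReal_le hd.2.ne hrge0, ← sqrt_sq_integral_eq hd]
    exact hrate
  -- the three functions
  set F1 : (Fin m → ℝ) × ℝ → ℝ := fun p =>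
    (1 / h) * (∫ a in (-1:ℝ)..1, ghat (p.1, p.2 - a * h) * deriv K a) - m₀j p with hF1def
  set F2 : (Fin m → ℝ) × ℝ → ℝ := fun p =>
    (1 / h) * (∫ a in (-1:ℝ)..1, (ghat (p.1, p.2 - a * h) - m₀ (p.1, p.2 - a * h)) * deriv K a)
    with hF2def
  set F3 : (Fin m → ℝ) × ℝ → ℝ := fun p =>
    (1 / h) * (∫ a in (-1:ℝ)..1, m₀ (p.1, p.2 - a * h) * deriv K a) - m₀j p with hF3def
  have hF1m : AEStronglyMeasurable F1 volume := (hSg_m.const_mul _).sub hm₀j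
  have hF2m : AEStronglyMeasurable F2 volume := hSd_m.const_mul _
  have hF3m : AEStronglyMeasurable F3 volume := (hSm_m.const_mul _).sub hm₀j
  have hlin : F1 =ᵐ[volume] fun p => F2 p + F3 p := by
    filter_upwards [hSg_i, hSm_i] with p h1 h2
    have hsub : (∫ a in (-1:ℝ)..1,
          (ghat (p.1, p.2 - a * h) - m₀ (p.1, p.2 - a * h)) * deriv K a)
        = (∫ a in (-1:ℝ)..1, ghat (p.1, p.2 - a * h) * deriv K a)
          - ∫ a in (-1:ℝ)..1, m₀ (p.1, p.2 - a * h) * deriv K a := by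
      rw [← intervalIntegral.integral_sub h1 h2]
      refine intervalIntegral.integral_congr fun a _ => ?_
      ring
    simp only [hF1def, hF2def, hF3def, hsub]
    ring
  have hF2b : eLpNorm F2 2 volume ≤ ENNReal.ofReal ((1 / h) * c0 * r) := by
    have hsmul : F2 = (1 / h : ℝ) • (fun p : (Fin m → ℝ) × ℝ =>
        ∫ a in (-1:ℝ)..1, (ghat (p.1, p.2 - a * h) - m₀ (p.1, p.2 - a * h)) * deriv K a) := by
      funext p; simp [hF2def, smul_eq_mul]
    rw [hsmul, eLpNorm_const_smul]
    have h1h : ((‖(1 / h : ℝ)‖₊ : ℝ≥0∞)) = ENNReal.ofReal (1 / h) :=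
      Real.enorm_eq_ofReal (by positivity)
    calc (‖(1 / h : ℝ)‖₊ : ℝ≥0∞) • eLpNorm (fun p : (Fin m → ℝ) × ℝ =>
        ∫ a in (-1:ℝ)..1, (ghat (p.1, p.2 - a * h) - m₀ (p.1, p.2 - a * h)) * deriv K a) 2 volume
        ≤ ENNReal.ofReal (1 / h) * (ENNReal.ofReal c0 *
            eLpNorm (fun p : (Fin m → ℝ) × ℝ => ghat p - m₀ p) 2 volume) := by
          rw [smul_eq_mul, h1h]
          exact mul_le_mul_right hSd_b _
      _ ≤ ENNReal.ofReal (1 / h) * (ENNReal.ofReal c0 * ENNReal.ofReal r) :=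
          mul_le_mul_right (mul_le_mul_right hrate' _) _
      _ = ENNReal.ofReal ((1 / h) * c0 * r) := by
          rw [← ENNReal.ofReal_mul hc0n, ← ENNReal.ofReal_mul (by positivity)]
          ring_nf
  have hF2mem : MemLp F2 2 volume := ⟨hF2m, lt_of_le_of_lt hF2b ENNReal.ofReal_lt_top⟩
  by_cases hc : MemLp F3 2 volume
  · have hbias3 : Real.sqrt (∫ p, F3 p ^ 2) ≤ B := hbias
    have hbias' : eLpNorm F3 2 volume ≤ ENNReal.ofReal B := by
      rw [ENNReal.le_ofReal_iff_toReal_le hc.2.ne hBge0, ← sqrt_sq_integral_eq hc]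
      exact hbias3
    have hF1mem : MemLp F1 2 volume := (hF2mem.add hc).ae_eq hlin.symm
    have h4 : eLpNorm F1 2 volume ≤ ENNReal.ofReal ((1 / h) * c0 * r) + ENNReal.ofReal B := by
      calc eLpNorm F1 2 volume = eLpNorm (fun p => F2 p + F3 p) 2 volume :=
            eLpNorm_congr_ae hlin
        _ ≤ eLpNorm F2 2 volume + eLpNorm F3 2 volume := eLpNorm_add_le hF2m hF3m (by norm_num)
        _ ≤ _ := add_le_add hF2b hbias'
    have h5 : eLpNorm F1 2 volume ≤ ENNReal.ofReal ((1 / h) * c0 * r + B) := by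
      rw [ENNReal.ofReal_add (by positivity) hBge0]; exact h4
    have h6 := ENNReal.toReal_le_of_le_ofReal (by positivity) h5
    show Real.sqrt (∫ p, F1 p ^ 2) ≤ c0 / h * r + B
    rw [sqrt_sq_integral_eq hF1mem]
    calc (eLpNorm F1 2 volume).toReal ≤ (1 / h) * c0 * r + B := h6
      _ = c0 / h * r + B := by ring
  · have hnot : ¬ Integrable (fun p : (Fin m → ℝ) × ℝ => F1 p ^ 2) volume := by
      intro hi
      have hF1mem : MemLp F1 2 volume := (memLp_two_iff_integrable_sq hF1m).2 hi
      refine hc ((hF1mem.sub hF2mem).ae_eq ?_)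
      filter_upwards [hlin] with p hp
      simp only [Pi.sub_apply, hp]
      ring
    show Real.sqrt (∫ p, F1 p ^ 2) ≤ c0 / h * r + B
    rw [integral_undef hnot, Real.sqrt_zero]
    have : 0 ≤ c0 / h * r + B := add_nonneg (mul_nonneg (by positivity) hrge0) hBge0
    linarith
end

section
/- Let d, r, r̄ ≥ 1 be integers, B ∈ ℝ^{d × r}, W ∈ ℝ^{d × r̄} with |W_{j,k}| ≤ c_W for all entries, H = d^{−1} Wᵀ B, and suppose H' ∈ ℝ^{r × r̄} satisfies H'H = I_r. Let m₀ : ℝ^r × ℝ → ℝ be measurable and satisfy |m₀(f, x) − m₀(f', x)| ≤ C_L ‖f − f'‖₂ for all f, f', x. Let (Ω, ℙ) be a probability space carrying measurable F : Ω → ℝ^r, X : Ω → ℝ, and u : Ω → ℝ^d with u_j u_{j'} integrable for all j, j'. Then, with F̃ = HF + d^{−1}Wᵀu, 𝔼[(m₀(F, X) − m₀(H'F̃, X))²] ≤ C_L² ‖H'‖_op² d^{−2} r̄ c_W² ( ∑_{j=1}^{d} 𝔼[u_j²] + ∑_{j ≠ j'} |𝔼[u_j u_{j'}]| ). -/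
open MeasureTheory

/-- The ℓ₂ operator norm of a real matrix, via its action on Euclidean space. -/
noncomputable def matOpNorm {a b : ℕ} (A : Matrix (Fin a) (Fin b) ℝ) : ℝ :=
  ‖LinearMap.toContinuousLinearMap (Matrix.toEuclideanLin A)‖

/-- Norm on Euclidean space of a plain vector. -/
lemma euclid_norm_sq {n : ℕ} (w : Fin n → ℝ) :
    ‖(WithLp.equiv 2 (Fin n → ℝ)).symm w‖ = Real.sqrt (∑ i, (w i) ^ 2) := by
  rw [EuclideanSpace.norm_eq]
  congr 1
  refine Finset.sum_congr rfl fun i _ => ?_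
  simp [Real.norm_eq_abs, sq_abs]

lemma mulVec_sq_sum_le {a b : ℕ} (A : Matrix (Fin a) (Fin b) ℝ) (w : Fin b → ℝ) :
    ∑ i, ((A.mulVec w) i) ^ 2 ≤ matOpNorm A ^ 2 * ∑ k, (w k) ^ 2 := by
  set V : EuclideanSpace ℝ (Fin b) := (WithLp.equiv 2 (Fin b → ℝ)).symm w with hV
  have hAV : (Matrix.toEuclideanLin A) V = (WithLp.equiv 2 (Fin a → ℝ)).symm (A.mulVec w) :=
    Matrix.toEuclideanLin_apply_piLp_toLp A w
  have hle : ‖(Matrix.toEuclideanLin A) V‖ ≤ matOpNorm A * ‖V‖ := by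
    have := (LinearMap.toContinuousLinearMap (Matrix.toEuclideanLin A)).le_opNorm V
    simpa [matOpNorm] using this
  have h2 := pow_le_pow_left₀ (norm_nonneg _) hle 2
  rw [hAV, euclid_norm_sq, mul_pow, hV, euclid_norm_sq,
    Real.sq_sqrt (Finset.sum_nonneg fun i _ => sq_nonneg _),
    Real.sq_sqrt (Finset.sum_nonneg fun i _ => sq_nonneg _)] at h2
  exact h2

/-- Mean-square bound for approximating `m₀(F, X)` by `g₀(F̃, X) = m₀(H'F̃, X)` where
`F̃ = HF + d⁻¹Wᵀu`:
`𝔼[(m₀(F,X) − m₀(H'F̃,X))²] ≤ C_L² ‖H'‖_op² d⁻² rbar c_W² (∑_j 𝔼u_j² + ∑_{j≠j'}|𝔼u_ju_{j'}|)`. -/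
theorem diversified_factor_mean_square_bound
    (d r rbar : ℕ) (hd : 1 ≤ d) (hr : 1 ≤ r) (hrbar : 1 ≤ rbar)
    (B : Matrix (Fin d) (Fin r) ℝ)
    (W : Matrix (Fin d) (Fin rbar) ℝ) (cW : ℝ) (hW : ∀ j k, |W j k| ≤ cW)
    (H : Matrix (Fin rbar) (Fin r) ℝ) (hH : H = (d : ℝ)⁻¹ • (W.transpose * B))
    (H' : Matrix (Fin r) (Fin rbar) ℝ) (hH' : H' * H = 1)
    (m₀ : (Fin r → ℝ) → ℝ → ℝ) (hm₀ : Measurable (Function.uncurry m₀)) (CL : ℝ)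
    (hLip : ∀ (f f' : Fin r → ℝ) (x : ℝ),
      |m₀ f x - m₀ f' x| ≤ CL * Real.sqrt (∑ i, (f i - f' i) ^ 2))
    (Ω : Type*) [MeasurableSpace Ω] (P : Measure Ω) [IsProbabilityMeasure P]
    (F : Ω → Fin r → ℝ) (X : Ω → ℝ) (u : Ω → Fin d → ℝ)
    (hF : Measurable F) (hX : Measurable X) (hu : Measurable u)
    (hint : ∀ j j' : Fin d, Integrable (fun ω => u ω j * u ω j') P) :
    (∫ ω, (m₀ (F ω) (X ω)
        - m₀ (H'.mulVec (H.mulVec (F ω) + (d : ℝ)⁻¹ • W.transpose.mulVec (u ω)))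
            (X ω)) ^ 2 ∂P)
      ≤ CL ^ 2 * matOpNorm H' ^ 2 * ((d : ℝ) ^ 2)⁻¹ * (rbar : ℝ) * cW ^ 2
          * ((∑ j : Fin d, ∫ ω, (u ω j) ^ 2 ∂P)
            + ∑ j : Fin d, ∑ j' : Fin d,
                if j = j' then 0 else |∫ ω, u ω j * u ω j' ∂P|) := by
  have hcW : 0 ≤ cW := le_trans (abs_nonneg _) (hW ⟨0, hd⟩ ⟨0, hrbar⟩)
  set N := matOpNorm H' with hN
  have hN0 : 0 ≤ N := norm_nonneg _
  set C : ℝ := CL ^ 2 * N ^ 2 * (((d : ℝ)) ^ 2)⁻¹ with hC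
  have hC0 : 0 ≤ C := by positivity
  -- the dominating function
  set s : Ω → ℝ := fun ω => ∑ k : Fin rbar, ∑ j : Fin d, ∑ j' : Fin d,
      (W j k * W j' k) * (u ω j * u ω j') with hs
  -- rewrite of the square of a sum
  have hsq : ∀ ω, ∑ k : Fin rbar, (∑ j, W j k * u ω j) ^ 2 = s ω := by
    intro ω
    refine Finset.sum_congr rfl fun k _ => ?_
    rw [sq, Finset.sum_mul_sum]
    refine Finset.sum_congr rfl fun j _ => Finset.sum_congr rfl fun j' _ => by ring
  -- the pointwise bound
  have hpt : ∀ ω, (m₀ (F ω) (X ω)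
      - m₀ (H'.mulVec (H.mulVec (F ω) + (d : ℝ)⁻¹ • W.transpose.mulVec (u ω)))
          (X ω)) ^ 2 ≤ C * s ω := by
    intro ω
    set v : Fin rbar → ℝ := (d : ℝ)⁻¹ • W.transpose.mulVec (u ω) with hv
    have harg : H'.mulVec (H.mulVec (F ω) + v) = F ω + H'.mulVec v := by
      rw [Matrix.mulVec_add, Matrix.mulVec_mulVec, hH', Matrix.one_mulVec]
    rw [harg]
    have hS0 : (0:ℝ) ≤ ∑ i, (F ω i - (F ω + H'.mulVec v) i) ^ 2 :=
      Finset.sum_nonneg fun i _ => sq_nonneg _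
    have h1 : (m₀ (F ω) (X ω) - m₀ (F ω + H'.mulVec v) (X ω)) ^ 2
        ≤ CL ^ 2 * ∑ i, (F ω i - (F ω + H'.mulVec v) i) ^ 2 :=
      calc (m₀ (F ω) (X ω) - m₀ (F ω + H'.mulVec v) (X ω)) ^ 2
          = |m₀ (F ω) (X ω) - m₀ (F ω + H'.mulVec v) (X ω)| ^ 2 := (sq_abs _).symm
        _ ≤ (CL * Real.sqrt (∑ i, (F ω i - (F ω + H'.mulVec v) i) ^ 2)) ^ 2 :=
            pow_le_pow_left₀ (abs_nonneg _) (hLip _ _ _) 2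
        _ = CL ^ 2 * Real.sqrt (∑ i, (F ω i - (F ω + H'.mulVec v) i) ^ 2) ^ 2 := by ring
        _ = CL ^ 2 * ∑ i, (F ω i - (F ω + H'.mulVec v) i) ^ 2 := by rw [Real.sq_sqrt hS0]
    have h2 : ∑ i, (F ω i - (F ω + H'.mulVec v) i) ^ 2 = ∑ i, ((H'.mulVec v) i) ^ 2 := by
      refine Finset.sum_congr rfl fun i _ => ?_
      simp only [Pi.add_apply]
      ring
    have h3 : ∑ i, ((H'.mulVec v) i) ^ 2 ≤ N ^ 2 * ∑ k, (v k) ^ 2 := mulVec_sq_sum_le H' v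
    have h4 : ∑ k, (v k) ^ 2 = (((d : ℝ)) ^ 2)⁻¹ * ∑ k : Fin rbar, (∑ j, W j k * u ω j) ^ 2 := by
      rw [Finset.mul_sum]
      refine Finset.sum_congr rfl fun k _ => ?_
      have : v k = (d : ℝ)⁻¹ * ∑ j, W j k * u ω j := by
        simp [hv, Matrix.mulVec, dotProduct, Matrix.transpose_apply]
      rw [this, mul_pow, ← inv_pow]
    calc (m₀ (F ω) (X ω) - m₀ (F ω + H'.mulVec v) (X ω)) ^ 2
        ≤ CL ^ 2 * ∑ i, (F ω i - (F ω + H'.mulVec v) i) ^ 2 := h1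
      _ = CL ^ 2 * ∑ i, ((H'.mulVec v) i) ^ 2 := by rw [h2]
      _ ≤ CL ^ 2 * (N ^ 2 * ∑ k, (v k) ^ 2) :=
          mul_le_mul_of_nonneg_left h3 (sq_nonneg _)
      _ = CL ^ 2 * (N ^ 2 * ((((d : ℝ)) ^ 2)⁻¹ *
            ∑ k : Fin rbar, (∑ j, W j k * u ω j) ^ 2)) := by rw [h4]
      _ = C * s ω := by rw [hC, ← hsq ω]; ring
  -- integrability of `s`
  have hsInt : Integrable s P := by
    refine integrable_finset_sum _ fun k _ => integrable_finset_sum _ fun j _ =>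
      integrable_finset_sum _ fun j' _ => ?_
    exact (hint j j').const_mul _
  -- measurability of the integrand
  have hm1 : Measurable fun ω => m₀ (F ω) (X ω) := hm₀.comp (hF.prodMk hX)
  have hargm : Measurable fun ω =>
      H'.mulVec (H.mulVec (F ω) + (d : ℝ)⁻¹ • W.transpose.mulVec (u ω)) := by
    apply measurable_pi_lambda
    intro i
    simp only [Matrix.mulVec, dotProduct, Pi.add_apply, Pi.smul_apply, smul_eq_mul,
      Matrix.transpose_apply]
    refine Finset.measurable_sum _ fun k _ => Measurable.const_mul ?_ _
    refine Measurable.add (Finset.measurable_sum _ fun j _ => ?_)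
      (Measurable.const_mul (Finset.measurable_sum _ fun j _ => ?_) _)
    · exact ((measurable_pi_apply j).comp hF).const_mul _
    · exact ((measurable_pi_apply j).comp hu).const_mul _
  have hm2 : Measurable fun ω =>
      m₀ (H'.mulVec (H.mulVec (F ω) + (d : ℝ)⁻¹ • W.transpose.mulVec (u ω))) (X ω) :=
    hm₀.comp (hargm.prodMk hX)
  have hmeas : Measurable fun ω => (m₀ (F ω) (X ω)
      - m₀ (H'.mulVec (H.mulVec (F ω) + (d : ℝ)⁻¹ • W.transpose.mulVec (u ω)))
          (X ω)) ^ 2 := (hm1.sub hm2).pow_const 2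
  have hIntLHS : Integrable (fun ω => (m₀ (F ω) (X ω)
      - m₀ (H'.mulVec (H.mulVec (F ω) + (d : ℝ)⁻¹ • W.transpose.mulVec (u ω)))
          (X ω)) ^ 2) P := by
    refine (hsInt.const_mul C).mono' hmeas.aestronglyMeasurable (ae_of_all _ fun ω => ?_)
    rw [Real.norm_eq_abs, abs_of_nonneg (sq_nonneg _)]
    exact hpt ω
  -- the value of the integral of `s`
  have hIs : ∫ ω, s ω ∂P = ∑ k : Fin rbar, ∑ j : Fin d, ∑ j' : Fin d,
      (W j k * W j' k) * ∫ ω, u ω j * u ω j' ∂P := by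
    rw [hs, integral_finset_sum _ fun k _ => integrable_finset_sum _ fun j _ =>
      integrable_finset_sum _ fun j' _ => (hint j j').const_mul _]
    refine Finset.sum_congr rfl fun k _ => ?_
    rw [integral_finset_sum _ fun j _ => integrable_finset_sum _ fun j' _ =>
      (hint j j').const_mul _]
    refine Finset.sum_congr rfl fun j _ => ?_
    rw [integral_finset_sum _ fun j' _ => (hint j j').const_mul _]
    exact Finset.sum_congr rfl fun j' _ => integral_const_mul _ _
  -- bound on the triple sum
  have hT : ∑ k : Fin rbar, ∑ j : Fin d, ∑ j' : Fin d,
      (W j k * W j' k) * ∫ ω, u ω j * u ω j' ∂P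
      ≤ (rbar : ℝ) * (cW ^ 2 * ∑ j : Fin d, ∑ j' : Fin d, |∫ ω, u ω j * u ω j' ∂P|) := by
    have hterm : ∀ (k : Fin rbar) (j j' : Fin d),
        (W j k * W j' k) * ∫ ω, u ω j * u ω j' ∂P
          ≤ cW ^ 2 * |∫ ω, u ω j * u ω j' ∂P| := by
      intro k j j'
      calc (W j k * W j' k) * ∫ ω, u ω j * u ω j' ∂P
          ≤ |(W j k * W j' k) * ∫ ω, u ω j * u ω j' ∂P| := le_abs_self _
        _ = |W j k| * |W j' k| * |∫ ω, u ω j * u ω j' ∂P| := by rw [abs_mul, abs_mul]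
        _ ≤ cW * cW * |∫ ω, u ω j * u ω j' ∂P| := by
            have := mul_le_mul (hW j k) (hW j' k) (abs_nonneg _) hcW
            exact mul_le_mul_of_nonneg_right this (abs_nonneg _)
        _ = cW ^ 2 * |∫ ω, u ω j * u ω j' ∂P| := by ring
    calc ∑ k : Fin rbar, ∑ j : Fin d, ∑ j' : Fin d,
          (W j k * W j' k) * ∫ ω, u ω j * u ω j' ∂P
        ≤ ∑ _k : Fin rbar, ∑ j : Fin d, ∑ j' : Fin d,
            cW ^ 2 * |∫ ω, u ω j * u ω j' ∂P| :=
          Finset.sum_le_sum fun k _ => Finset.sum_le_sum fun j _ =>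
            Finset.sum_le_sum fun j' _ => hterm k j j'
      _ = (rbar : ℝ) * (cW ^ 2 * ∑ j : Fin d, ∑ j' : Fin d, |∫ ω, u ω j * u ω j' ∂P|) := by
          rw [Finset.sum_const, Finset.card_univ, Fintype.card_fin, nsmul_eq_mul]
          congr 1
          rw [Finset.mul_sum]
          exact Finset.sum_congr rfl fun j _ => by rw [Finset.mul_sum]
  -- splitting the absolute-moment sum into diagonal and off-diagonal parts
  have hsplit : ∑ j : Fin d, ∑ j' : Fin d, |∫ ω, u ω j * u ω j' ∂P|
      = (∑ j : Fin d, ∫ ω, (u ω j) ^ 2 ∂P)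
        + ∑ j : Fin d, ∑ j' : Fin d, if j = j' then 0 else |∫ ω, u ω j * u ω j' ∂P| := by
    rw [← Finset.sum_add_distrib]
    refine Finset.sum_congr rfl fun j _ => ?_
    have hdiag : ∫ ω, u ω j * u ω j ∂P = ∫ ω, (u ω j) ^ 2 ∂P := by
      refine integral_congr_ae (ae_of_all _ fun ω => ?_)
      simp [sq]
    have h1 : ∀ j' : Fin d, |∫ ω, u ω j * u ω j' ∂P|
        = (if j = j' then |∫ ω, u ω j * u ω j' ∂P| else 0)
          + (if j = j' then 0 else |∫ ω, u ω j * u ω j' ∂P|) := by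
      intro j'
      by_cases h : j = j' <;> simp [h]
    calc ∑ j' : Fin d, |∫ ω, u ω j * u ω j' ∂P|
        = ∑ j' : Fin d, ((if j = j' then |∫ ω, u ω j * u ω j' ∂P| else 0)
            + (if j = j' then 0 else |∫ ω, u ω j * u ω j' ∂P|)) :=
          Finset.sum_congr rfl fun j' _ => h1 j'
      _ = (∑ j' : Fin d, if j = j' then |∫ ω, u ω j * u ω j' ∂P| else 0)
            + ∑ j' : Fin d, if j = j' then 0 else |∫ ω, u ω j * u ω j' ∂P| :=
          Finset.sum_add_distrib
      _ = (∫ ω, (u ω j) ^ 2 ∂P)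
            + ∑ j' : Fin d, if j = j' then 0 else |∫ ω, u ω j * u ω j' ∂P| := by
          congr 1
          rw [Finset.sum_ite_eq]
          simp only [Finset.mem_univ, if_true]
          rw [hdiag, abs_of_nonneg (integral_nonneg fun ω => sq_nonneg _)]
  -- putting everything together
  calc (∫ ω, (m₀ (F ω) (X ω)
        - m₀ (H'.mulVec (H.mulVec (F ω) + (d : ℝ)⁻¹ • W.transpose.mulVec (u ω)))
            (X ω)) ^ 2 ∂P)
      ≤ ∫ ω, C * s ω ∂P := integral_mono hIntLHS (hsInt.const_mul C) hpt
    _ = C * ∫ ω, s ω ∂P := integral_const_mul _ _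
    _ ≤ C * ((rbar : ℝ) * (cW ^ 2 * ∑ j : Fin d, ∑ j' : Fin d, |∫ ω, u ω j * u ω j' ∂P|)) := by
        rw [hIs]
        exact mul_le_mul_of_nonneg_left hT hC0
    _ = CL ^ 2 * N ^ 2 * ((d : ℝ) ^ 2)⁻¹ * (rbar : ℝ) * cW ^ 2
          * ((∑ j : Fin d, ∫ ω, (u ω j) ^ 2 ∂P)
            + ∑ j : Fin d, ∑ j' : Fin d,
                if j = j' then 0 else |∫ ω, u ω j * u ω j' ∂P|) := by
        rw [hsplit, hC]; ring
end

section
/- Fix γ > 0 and define Ψ : ℝ → ℝ by Ψ(t) = t for |t| ≤ γ, and Ψ(t) = sgn(t)·γ − 1/2 + 1/(1 + exp(−4(t − sgn(t)·γ))) for |t| > γ. Then Ψ is twice differentiable on all of ℝ; Ψ, its first derivative Ψ', and its second derivative Ψ'' are all bounded on ℝ (with |Ψ(t)| ≤ γ + 1/2, |Ψ'(t)| ≤ 1, and |Ψ''(t)| ≤ 4 for every t); and Ψ(t) = t for all |t| ≤ γ. -/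
open Real Filter Set

noncomputable def gfun (c : ℝ) : ℝ → ℝ :=
  fun s => c - 1/2 + 1/(1 + Real.exp (-(4*(s - c))))

noncomputable def gd (c t : ℝ) : ℝ :=
  4 * Real.exp (-(4*(t - c))) / (1 + Real.exp (-(4*(t - c))))^2

noncomputable def gdd (c t : ℝ) : ℝ :=
  16 * Real.exp (-(4*(t - c))) * (Real.exp (-(4*(t - c))) - 1) /
    (1 + Real.exp (-(4*(t - c))))^3

lemma hasDerivAt_E (c t : ℝ) :
    HasDerivAt (fun s : ℝ => Real.exp (-(4*(s - c)))) (Real.exp (-(4*(t - c))) * (-4)) t := by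
  have h1 : HasDerivAt (fun s : ℝ => -(4*(s - c))) (-4) t := by
    exact (((hasDerivAt_id' t).sub_const c).const_mul 4).neg.congr_deriv (by norm_num)
  simpa using h1.exp

lemma hasDerivAt_gfun (c t : ℝ) : HasDerivAt (gfun c) (gd c t) t := by
  have hE := hasDerivAt_E c t
  have hden : HasDerivAt (fun s : ℝ => 1 + Real.exp (-(4*(s - c))))
      (Real.exp (-(4*(t - c))) * (-4)) t := hE.const_add 1
  have hne : (1 + Real.exp (-(4*(t - c)))) ≠ 0 := by positivity
  have h := (hden.inv hne).const_add (c - 1/2)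
  have heq : gfun c = fun s => (c - 1/2) + (1 + Real.exp (-(4*(s - c))))⁻¹ := by
    funext s; simp [gfun, one_div]
  rw [heq]
  refine h.congr_deriv ?_
  unfold gd
  field_simp

lemma hasDerivAt_gd (c t : ℝ) : HasDerivAt (fun s => gd c s) (gdd c t) t := by
  have hE := hasDerivAt_E c t
  have hnum : HasDerivAt (fun s : ℝ => 4 * Real.exp (-(4*(s - c))))
      (4 * (Real.exp (-(4*(t - c))) * (-4))) t := hE.const_mul 4
  have hden : HasDerivAt (fun s : ℝ => (1 + Real.exp (-(4*(s - c))))^2)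
      ((2:ℕ) * (1 + Real.exp (-(4*(t-c))))^1 * (Real.exp (-(4*(t - c))) * (-4))) t :=
    (hE.const_add 1).pow 2
  have hne : (1 + Real.exp (-(4*(t - c))))^2 ≠ 0 := by positivity
  have h := hnum.div hden hne
  have hne' : (1 + Real.exp (-(4*(t - c)))) ≠ 0 := by positivity
  refine h.congr_deriv ?_
  unfold gdd
  field_simp
  ring

lemma gfun_self (c : ℝ) : gfun c c = c := by
  unfold gfun; norm_num

lemma gd_self (c : ℝ) : gd c c = 1 := by
  unfold gd; norm_num

lemma gdd_self (c : ℝ) : gdd c c = 0 := by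
  unfold gdd; norm_num

lemma abs_gfun_le (c t : ℝ) : |gfun c t| ≤ |c| + 1/2 := by
  have hE : 0 < Real.exp (-(4*(t-c))) := Real.exp_pos _
  have h1 : 0 < 1/(1+Real.exp (-(4*(t-c)))) := by positivity
  have h2 : 1/(1+Real.exp (-(4*(t-c)))) < 1 := by
    rw [div_lt_one (by positivity)]; linarith
  unfold gfun
  rw [abs_le]
  constructor <;> nlinarith [neg_abs_le c, le_abs_self c]

lemma abs_gd_le (c t : ℝ) : |gd c t| ≤ 1 := by
  have hE : 0 < Real.exp (-(4*(t-c))) := Real.exp_pos _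
  have hpos : 0 < gd c t := by unfold gd; positivity
  rw [abs_of_pos hpos]
  unfold gd
  rw [div_le_one (by positivity)]
  nlinarith [sq_nonneg (1 - Real.exp (-(4*(t-c))))]

lemma abs_gdd_le (c t : ℝ) : |gdd c t| ≤ 4 := by
  have hE : 0 < Real.exp (-(4*(t-c))) := Real.exp_pos _
  have hp3 : (0:ℝ) < (1 + Real.exp (-(4*(t-c))))^3 := by positivity
  unfold gdd
  rw [abs_le]
  constructor
  · rw [le_div_iff₀ hp3]
    nlinarith [sq_nonneg (14 * Real.exp (-(4*(t-c))) - 1)]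
  · rw [div_le_iff₀ hp3]
    nlinarith [mul_nonneg hE.le (sq_nonneg (Real.exp (-(4*(t-c))) - 1))]

noncomputable def psi1 (γ t : ℝ) : ℝ := if |t| ≤ γ then 1 else gd (Real.sign t * γ) t
noncomputable def psi2 (γ t : ℝ) : ℝ := if |t| ≤ γ then 0 else gdd (Real.sign t * γ) t

/-- The explicit truncation function: for `γ > 0`, `Ψ(t) = t` for `|t| ≤ γ` and
`Ψ(t) = sgn(t)γ − 1/2 + 1/(1 + exp(−4(t − sgn(t)γ)))` for `|t| > γ`.  Then `Ψ` is twice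
differentiable on all of `ℝ`; `Ψ`, `Ψ'` and `Ψ''` are bounded (with `|Ψ| ≤ γ + 1/2`,
`|Ψ'| ≤ 1`, `|Ψ''| ≤ 4`); and `Ψ(t) = t` for `|t| ≤ γ`. -/
theorem truncation_function_properties (γ : ℝ) (hγ : 0 < γ) (Ψ : ℝ → ℝ)
    (hΨ : ∀ t : ℝ, Ψ t = if |t| ≤ γ then t
      else Real.sign t * γ - 1 / 2
        + 1 / (1 + Real.exp (-(4 * (t - Real.sign t * γ))))) :
    (∀ t : ℝ, DifferentiableAt ℝ Ψ t) ∧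
    (∀ t : ℝ, DifferentiableAt ℝ (deriv Ψ) t) ∧
    (∀ t : ℝ, |Ψ t| ≤ γ + 1 / 2) ∧
    (∀ t : ℝ, |deriv Ψ t| ≤ 1) ∧
    (∀ t : ℝ, |deriv (deriv Ψ) t| ≤ 4) ∧
    (∀ t : ℝ, |t| ≤ γ → Ψ t = t) := by
  -- basic description lemmas
  have hΨ' : ∀ t : ℝ, Ψ t = if |t| ≤ γ then t else gfun (Real.sign t * γ) t := by
    intro t; rw [hΨ t]; unfold gfun; ring_nf
  have hmid : ∀ s : ℝ, |s| ≤ γ → Ψ s = s := by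
    intro s hs; rw [hΨ' s, if_pos hs]
  have hpos : ∀ s : ℝ, γ ≤ s → Ψ s = gfun γ s := by
    intro s hs
    rcases eq_or_lt_of_le hs with h | h
    · rw [← h, gfun_self, hmid γ (by rw [abs_of_pos hγ])]
    · have hs0 : 0 < s := lt_trans hγ h
      rw [hΨ' s, if_neg (by rw [abs_of_pos hs0]; exact not_le.2 h),
        Real.sign_of_pos hs0, one_mul]
  have hneg : ∀ s : ℝ, s ≤ -γ → Ψ s = gfun (-γ) s := by
    intro s hs
    rcases eq_or_lt_of_le hs with h | h
    · rw [h, gfun_self, hmid (-γ) (by rw [abs_neg, abs_of_pos hγ])]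
    · have hs0 : s < 0 := by linarith
      rw [hΨ' s, if_neg (by rw [abs_of_neg hs0]; push_neg; linarith),
        Real.sign_of_neg hs0, neg_one_mul]
  have hmid1 : ∀ s : ℝ, |s| ≤ γ → psi1 γ s = 1 := by
    intro s hs; unfold psi1; rw [if_pos hs]
  have hpos1 : ∀ s : ℝ, γ ≤ s → psi1 γ s = gd γ s := by
    intro s hs
    rcases eq_or_lt_of_le hs with h | h
    · rw [← h, gd_self, hmid1 γ (by rw [abs_of_pos hγ])]
    · have hs0 : 0 < s := lt_trans hγ h
      unfold psi1
      rw [if_neg (by rw [abs_of_pos hs0]; exact not_le.2 h), Real.sign_of_pos hs0, one_mul]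
  have hneg1 : ∀ s : ℝ, s ≤ -γ → psi1 γ s = gd (-γ) s := by
    intro s hs
    rcases eq_or_lt_of_le hs with h | h
    · rw [h, gd_self, hmid1 (-γ) (by rw [abs_neg, abs_of_pos hγ])]
    · have hs0 : s < 0 := by linarith
      unfold psi1
      rw [if_neg (by rw [abs_of_neg hs0]; push_neg; linarith), Real.sign_of_neg hs0, neg_one_mul]
  -- first derivative
  have lemA : ∀ t : ℝ, HasDerivAt Ψ (psi1 γ t) t := by
    intro t
    rcases lt_trichotomy t γ with htγ | htγ | htγ
    · rcases lt_trichotomy t (-γ) with htn | htn | htn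
      · -- t < -γ
        have h1 : psi1 γ t = gd (-γ) t := hneg1 t htn.le
        rw [h1]
        refine (hasDerivAt_gfun (-γ) t).congr_of_eventuallyEq ?_
        filter_upwards [isOpen_Iio.mem_nhds htn] with s hs
        exact hneg s (le_of_lt hs)
      · -- t = -γ : glue
        subst htn
        have habs : |(-γ)| ≤ γ := by rw [abs_neg, abs_of_pos hγ]
        rw [hmid1 _ habs]
        have h1 : HasDerivWithinAt Ψ 1 (Iic (-γ)) (-γ) := by
          have hg : HasDerivWithinAt (gfun (-γ)) (gd (-γ) (-γ)) (Iic (-γ)) (-γ) :=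
            (hasDerivAt_gfun (-γ) (-γ)).hasDerivWithinAt
          rw [gd_self] at hg
          exact hg.congr (fun s hs => hneg s hs) (hneg (-γ) le_rfl)
        have h2 : HasDerivWithinAt Ψ 1 (Icc (-γ) γ) (-γ) := by
          have hg : HasDerivWithinAt (fun s : ℝ => s) 1 (Icc (-γ) γ) (-γ) :=
            (hasDerivAt_id (-γ)).hasDerivWithinAt
          exact hg.congr (fun s hs => hmid s (abs_le.mpr ⟨hs.1, hs.2⟩)) (hmid _ habs)
        have h3 := h1.union h2
        rw [Set.Iic_union_Icc_eq_Iic (by linarith)] at h3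
        exact h3.hasDerivAt (Iic_mem_nhds (by linarith))
      · -- -γ < t < γ
        have habs : |t| ≤ γ := by rw [abs_le]; constructor <;> linarith
        rw [hmid1 t habs]
        refine (hasDerivAt_id t).congr_of_eventuallyEq ?_
        have hopen : IsOpen {s : ℝ | |s| < γ} := isOpen_lt continuous_abs continuous_const
        have hmem : t ∈ {s : ℝ | |s| < γ} := by rw [Set.mem_setOf_eq, abs_lt]; exact ⟨htn, htγ⟩
        filter_upwards [hopen.mem_nhds hmem] with s hs
        exact hmid s (le_of_lt hs)
    · -- t = γ : glue
      rw [htγ]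
      have habs : |γ| ≤ γ := by rw [abs_of_pos hγ]
      rw [hmid1 _ habs]
      have h1 : HasDerivWithinAt Ψ 1 (Icc (-γ) γ) γ := by
        have hg : HasDerivWithinAt (fun s : ℝ => s) 1 (Icc (-γ) γ) γ :=
          (hasDerivAt_id γ).hasDerivWithinAt
        exact hg.congr (fun s hs => hmid s (abs_le.mpr ⟨hs.1, hs.2⟩)) (hmid _ habs)
      have h2 : HasDerivWithinAt Ψ 1 (Ici γ) γ := by
        have hg : HasDerivWithinAt (gfun γ) (gd γ γ) (Ici γ) γ :=
          (hasDerivAt_gfun γ γ).hasDerivWithinAt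
        rw [gd_self] at hg
        exact hg.congr (fun s hs => hpos s hs) (hpos γ le_rfl)
      have h3 := h1.union h2
      rw [Set.Icc_union_Ici_eq_Ici (by linarith)] at h3
      exact h3.hasDerivAt (Ici_mem_nhds (by linarith))
    · -- γ < t
      have h1 : psi1 γ t = gd γ t := hpos1 t htγ.le
      rw [h1]
      refine (hasDerivAt_gfun γ t).congr_of_eventuallyEq ?_
      filter_upwards [isOpen_Ioi.mem_nhds htγ] with s hs
      exact hpos s (le_of_lt hs)
  have hderiv : deriv Ψ = psi1 γ := funext fun t => (lemA t).deriv
  -- second derivative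
  have hmid2 : ∀ s : ℝ, |s| ≤ γ → psi2 γ s = 0 := by
    intro s hs; unfold psi2; rw [if_pos hs]
  have lemB : ∀ t : ℝ, HasDerivAt (psi1 γ) (psi2 γ t) t := by
    intro t
    rcases lt_trichotomy t γ with htγ | htγ | htγ
    · rcases lt_trichotomy t (-γ) with htn | htn | htn
      · have h1 : psi2 γ t = gdd (Real.sign t * γ) t := by
          unfold psi2
          rw [if_neg (by rw [abs_of_neg (by linarith : t < 0)]; push_neg; linarith)]
        have hsgn : Real.sign t * γ = -γ := by
          rw [Real.sign_of_neg (by linarith : t < 0), neg_one_mul]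
        rw [h1, hsgn]
        refine (hasDerivAt_gd (-γ) t).congr_of_eventuallyEq ?_
        filter_upwards [isOpen_Iio.mem_nhds htn] with s hs
        exact hneg1 s (le_of_lt hs)
      · subst htn
        have habs : |(-γ)| ≤ γ := by rw [abs_neg, abs_of_pos hγ]
        rw [hmid2 _ habs]
        have h1 : HasDerivWithinAt (psi1 γ) 0 (Iic (-γ)) (-γ) := by
          have hg : HasDerivWithinAt (fun s => gd (-γ) s) (gdd (-γ) (-γ)) (Iic (-γ)) (-γ) :=
            (hasDerivAt_gd (-γ) (-γ)).hasDerivWithinAt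
          rw [gdd_self] at hg
          exact hg.congr (fun s hs => hneg1 s hs) (hneg1 (-γ) le_rfl)
        have h2 : HasDerivWithinAt (psi1 γ) 0 (Icc (-γ) γ) (-γ) := by
          have hg : HasDerivWithinAt (fun _ : ℝ => (1:ℝ)) 0 (Icc (-γ) γ) (-γ) :=
            (hasDerivAt_const (-γ) (1:ℝ)).hasDerivWithinAt
          exact hg.congr (fun s hs => hmid1 s (abs_le.mpr ⟨hs.1, hs.2⟩)) (hmid1 _ habs)
        have h3 := h1.union h2
        rw [Set.Iic_union_Icc_eq_Iic (by linarith)] at h3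
        exact h3.hasDerivAt (Iic_mem_nhds (by linarith))
      · have habs : |t| ≤ γ := by rw [abs_le]; constructor <;> linarith
        rw [hmid2 t habs]
        refine (hasDerivAt_const t (1:ℝ)).congr_of_eventuallyEq ?_
        have hopen : IsOpen {s : ℝ | |s| < γ} := isOpen_lt continuous_abs continuous_const
        have hmem : t ∈ {s : ℝ | |s| < γ} := by rw [Set.mem_setOf_eq, abs_lt]; exact ⟨htn, htγ⟩
        filter_upwards [hopen.mem_nhds hmem] with s hs
        exact hmid1 s (le_of_lt hs)
    · rw [htγ]
      have habs : |γ| ≤ γ := by rw [abs_of_pos hγ]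
      rw [hmid2 _ habs]
      have h1 : HasDerivWithinAt (psi1 γ) 0 (Icc (-γ) γ) γ := by
        have hg : HasDerivWithinAt (fun _ : ℝ => (1:ℝ)) 0 (Icc (-γ) γ) γ :=
          (hasDerivAt_const γ (1:ℝ)).hasDerivWithinAt
        exact hg.congr (fun s hs => hmid1 s (abs_le.mpr ⟨hs.1, hs.2⟩)) (hmid1 _ habs)
      have h2 : HasDerivWithinAt (psi1 γ) 0 (Ici γ) γ := by
        have hg : HasDerivWithinAt (fun s => gd γ s) (gdd γ γ) (Ici γ) γ :=
          (hasDerivAt_gd γ γ).hasDerivWithinAt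
        rw [gdd_self] at hg
        exact hg.congr (fun s hs => hpos1 s hs) (hpos1 γ le_rfl)
      have h3 := h1.union h2
      rw [Set.Icc_union_Ici_eq_Ici (by linarith)] at h3
      exact h3.hasDerivAt (Ici_mem_nhds (by linarith))
    · have h1 : psi2 γ t = gdd (Real.sign t * γ) t := by
        unfold psi2
        rw [if_neg (by rw [abs_of_pos (by linarith : 0 < t)]; exact not_le.2 htγ)]
      have hsgn : Real.sign t * γ = γ := by
        rw [Real.sign_of_pos (by linarith : 0 < t), one_mul]
      rw [h1, hsgn]
      refine (hasDerivAt_gd γ t).congr_of_eventuallyEq ?_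
      filter_upwards [isOpen_Ioi.mem_nhds htγ] with s hs
      exact hpos1 s (le_of_lt hs)
  have hderiv2 : deriv (deriv Ψ) = psi2 γ := by
    rw [hderiv]; exact funext fun t => (lemB t).deriv
  refine ⟨fun t => (lemA t).differentiableAt, ?_, ?_, ?_, ?_, hmid⟩
  · intro t; rw [hderiv]; exact (lemB t).differentiableAt
  · intro t
    rw [hΨ' t]
    by_cases h : |t| ≤ γ
    · rw [if_pos h]; linarith
    · rw [if_neg h]
      have ht0 : t ≠ 0 := by
        intro h0; apply h; rw [h0, abs_zero]; linarith
      have hsgn : |Real.sign t * γ| = γ := by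
        rcases lt_trichotomy t 0 with h' | h' | h'
        · rw [Real.sign_of_neg h', neg_one_mul, abs_neg, abs_of_pos hγ]
        · exact absurd h' ht0
        · rw [Real.sign_of_pos h', one_mul, abs_of_pos hγ]
      calc |gfun (Real.sign t * γ) t| ≤ |Real.sign t * γ| + 1/2 := abs_gfun_le _ _
        _ = γ + 1/2 := by rw [hsgn]
  · intro t
    rw [hderiv]
    unfold psi1
    by_cases h : |t| ≤ γ
    · rw [if_pos h]; norm_num
    · rw [if_neg h]; exact abs_gd_le _ _
  · intro t
    rw [hderiv2]
    unfold psi2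
    by_cases h : |t| ≤ γ
    · rw [if_pos h]; norm_num
    · rw [if_neg h]; exact abs_gdd_le _ _
end

section
/- Let K : ℝ → ℝ be continuously differentiable, supported on [−1, 1], with K(−1) = K(1) = 0, derivative K̇, and ∫_{−1}^{1} K(a) da = 1. Let p : ℝ → ℝ be differentiable everywhere with bounded derivative p', and suppose p' is continuous at the point x. Then (1/h) ∫_{−1}^{1} K̇(a) · p(x − a h) da → p'(x) as h → 0⁺. In particular, for such p, the kernel-smoothed derivative of p at x converges to the true derivative p'(x) as the bandwidth tends to zero. -/
open MeasureTheory Filter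

/-- The kernel-smoothed derivative converges to the true derivative as the bandwidth tends
to zero: if `K` is a `C¹` kernel supported on `[−1,1]` with `K(−1) = K(1) = 0` and
`∫_{−1}^1 K = 1`, and `p` is everywhere differentiable with bounded derivative `p'`
continuous at `x`, then `(1/h) ∫_{−1}^1 K̇(a) p(x − a h) da → p'(x)` as `h → 0⁺`. -/
theorem smoothed_derivative_tendsto_deriv (K : ℝ → ℝ) (hK : ContDiff ℝ 1 K)
    (hsupp : Function.support K ⊆ Set.Icc (-1) 1)
    (hKm1 : K (-1) = 0) (hKp1 : K 1 = 0)
    (hKint : (∫ a in (-1 : ℝ)..1, K a) = 1)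
    (p : ℝ → ℝ) (hp : Differentiable ℝ p) (M : ℝ) (hM : ∀ z, |deriv p z| ≤ M)
    (x : ℝ) (hcont : ContinuousAt (deriv p) x) :
    Tendsto (fun h : ℝ => (1 / h) * ∫ a in (-1 : ℝ)..1, deriv K a * p (x - a * h))
      (nhdsWithin 0 (Set.Ioi 0)) (nhds (deriv p x)) := by
  have hM0 : 0 ≤ M := le_trans (abs_nonneg _) (hM 0)
  have hKc : Continuous K := hK.continuous
  have hK'c : Continuous (deriv K) := hK.continuous_deriv le_rfl
  have hmp : Measurable (deriv p) := measurable_deriv p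
  -- measurability of the translated derivative
  have hmeas : ∀ h : ℝ, AEStronglyMeasurable (fun a : ℝ => deriv p (x - a * h))
      (volume.restrict (Set.Ioc (-1:ℝ) 1)) := by
    intro h
    exact ((hmp.comp ((continuous_const.sub (continuous_id.mul
      continuous_const)).measurable)).aestronglyMeasurable)
  -- Step 1: integration by parts identity for h > 0
  have key : ∀ h : ℝ, 0 < h →
      (1 / h) * (∫ a in (-1:ℝ)..1, deriv K a * p (x - a * h))
        = ∫ a in (-1:ℝ)..1, deriv p (x - a * h) * K a := by
    intro h hh
    have hu : ∀ a ∈ Set.uIcc (-1:ℝ) 1,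
        HasDerivAt (fun a : ℝ => p (x - a * h)) (deriv p (x - a * h) * (-h)) a := by
      intro a _
      have h1 : HasDerivAt (fun a : ℝ => x - a * h) (-h) a := by
        exact (((hasDerivAt_id' a).mul_const h).const_sub x).congr_deriv (by ring)
      exact (hp (x - a * h)).hasDerivAt.comp a h1
    have hv : ∀ a ∈ Set.uIcc (-1:ℝ) 1, HasDerivAt K (deriv K a) a := fun a _ =>
      ((hK.differentiable one_ne_zero) a).hasDerivAt
    have hu' : IntervalIntegrable (fun a : ℝ => deriv p (x - a * h) * (-h))
        volume (-1) 1 := by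
      rw [intervalIntegrable_iff_integrableOn_Ioc_of_le (by norm_num)]
      apply Integrable.mono' (g := fun _ => M * h)
      · exact integrableOn_const measure_Ioc_lt_top.ne
      · exact (hmeas h).mul aestronglyMeasurable_const
      · filter_upwards with a
        rw [norm_mul]
        gcongr
        · exact hM _
        · simp [abs_of_pos hh]
    have hv' : IntervalIntegrable (deriv K) volume (-1) 1 :=
      hK'c.intervalIntegrable _ _
    have ibp := intervalIntegral.integral_mul_deriv_eq_deriv_mul hu hv hu' hv'
    have hcomm : (∫ a in (-1:ℝ)..1, deriv K a * p (x - a * h))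
        = ∫ a in (-1:ℝ)..1, p (x - a * h) * deriv K a := by
      simp [mul_comm]
    rw [hcomm, ibp, hKp1, hKm1]
    have : (∫ a in (-1:ℝ)..1, deriv p (x - a * h) * (-h) * K a)
        = (-h) * ∫ a in (-1:ℝ)..1, deriv p (x - a * h) * K a := by
      rw [← intervalIntegral.integral_const_mul]
      congr 1; ext a; ring
    rw [this]
    field_simp
    ring
  -- Step 2: the limit of the smoothed derivative integral
  have hbound : IntegrableOn (fun a : ℝ => M * |K a|) (Set.Ioc (-1:ℝ) 1) volume :=
    (continuous_const.mul hKc.abs).integrableOn_Ioc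
  have lim : Tendsto (fun h : ℝ => ∫ a in (-1:ℝ)..1, deriv p (x - a * h) * K a)
      (nhdsWithin 0 (Set.Ioi 0)) (nhds (deriv p x)) := by
    have hIoc : ∀ h : ℝ, (∫ a in (-1:ℝ)..1, deriv p (x - a * h) * K a)
        = ∫ a in Set.Ioc (-1:ℝ) 1, deriv p (x - a * h) * K a := by
      intro h
      rw [intervalIntegral.integral_of_le (by norm_num)]
    have hlim0 : Tendsto (fun h : ℝ => ∫ a in Set.Ioc (-1:ℝ) 1, deriv p (x - a * h) * K a)
        (nhdsWithin 0 (Set.Ioi 0))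
        (nhds (∫ a in Set.Ioc (-1:ℝ) 1, deriv p x * K a)) := by
      apply tendsto_integral_filter_of_dominated_convergence (fun a => M * |K a|)
      · filter_upwards with h
        exact (hmeas h).mul hKc.aestronglyMeasurable.restrict
      · filter_upwards with h
        filter_upwards with a
        rw [norm_mul, Real.norm_eq_abs, Real.norm_eq_abs]
        gcongr
        exact hM _
      · exact hbound
      · filter_upwards with a
        have hx : Tendsto (fun h : ℝ => x - a * h) (nhdsWithin 0 (Set.Ioi 0)) (nhds x) := by
          have : Tendsto (fun h : ℝ => x - a * h) (nhds 0) (nhds (x - a * 0)) := by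
            exact (tendsto_const_nhds.sub (tendsto_const_nhds.mul tendsto_id))
          simpa using this.mono_left nhdsWithin_le_nhds
        exact ((hcont.tendsto.comp hx).mul tendsto_const_nhds)
    have : (∫ a in Set.Ioc (-1:ℝ) 1, deriv p x * K a) = deriv p x := by
      rw [integral_const_mul, ← intervalIntegral.integral_of_le (by norm_num : (-1:ℝ) ≤ 1),
        hKint, mul_one]
    rw [this] at hlim0
    exact hlim0.congr fun h => (hIoc h).symm
  refine lim.congr' ?_
  filter_upwards [self_mem_nhdsWithin] with h hh
  exact (key h hh).symm
end
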